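/- arXiv:2410.07371 — 8 statements merged into one kernel-verified Lean document; each statement's English description precedes it below -/
import Mathlib

section
/- The p-th term of the lower central series of W(F) is the set of constant tuples: γ_p(W(F)) = { (λ,λ,…,λ) : λ ∈ F }. -/
open Pointwise

namespace GGS
noncomputable section

variable (p : ℕ)

def shiftAut (G : Type*) [Group G] : Multiplicative (ZMod p) →* MulAut (ZMod p → G) :=
  MonoidHom.mk'
    (fun k =>
      { toFun := fun g i => g (i + Multiplicative.toAdd k)
        invFun := fun g i => g (i - Multiplicative.toAdd k)
        left_inv := fun g => by funext i; simp
        right_inv := fun g => by funext i; simp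
        map_mul' := fun g h => rfl })
    (fun k l => by
      apply MulEquiv.ext
      intro g
      funext i
      show g (i + Multiplicative.toAdd (k * l)) = g (i + Multiplicative.toAdd k + Multiplicative.toAdd l)
      rw [toAdd_mul, add_assoc])

abbrev W (G : Type*) [Group G] :=
  SemidirectProduct (ZMod p → G) (Multiplicative (ZMod p)) (shiftAut p G)

def inlW (G : Type*) [Group G] : (ZMod p → G) →* W p G := SemidirectProduct.inl

def sigma (G : Type*) [Group G] : W p G := SemidirectProduct.inr (Multiplicative.ofAdd (1 : ZMod p))

def baseW (G : Type*) [Group G] : Subgroup (W p G) := (inlW p G).range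

/-- Δ(g) = [g,σ] = g⁻¹ σ⁻¹ g σ, read off in the base group. -/
def Delta (G : Type*) [Group G] (g : ZMod p → G) : ZMod p → G :=
  ((inlW p G g)⁻¹ * (sigma p G)⁻¹ * inlW p G g * sigma p G).left

/-- γ₁* = B(G), γ_{i+1}* = [γ_i*, W(G)]; here `gammaStar n` is γ_{n+1}*. -/
def gammaStar (G : Type*) [Group G] : ℕ → Subgroup (W p G)
  | 0 => baseW p G
  | (n + 1) => ⁅gammaStar G n, ⊤⁆

def lamG (G : Type*) [Group G] (g : G) (i : ℕ) : ZMod p → G :=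
  (Delta p G)^[i - 1] (fun t => if t = 0 then g else 1)

def BSub (G : Type*) [Group G] (H : Subgroup G) : Subgroup (W p G) :=
  Subgroup.map (inlW p G) (Subgroup.pi Set.univ fun _ => H)

def inlF (F : Type*) [AddGroup F] (v : ZMod p → F) : W p (Multiplicative F) :=
  inlW p (Multiplicative F) (fun i => Multiplicative.ofAdd (v i))

def DeltaF (F : Type*) [AddGroup F] (v : ZMod p → F) : ZMod p → F :=
  fun i => Multiplicative.toAdd (Delta p (Multiplicative F) (fun j => Multiplicative.ofAdd (v j)) i)

def lamF (F : Type*) [AddGroup F] [One F] (i : ℕ) : ZMod p → F :=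
  (DeltaF p F)^[i - 1] (fun j => if j = 0 then 1 else 0)

end
end GGS

namespace GGS
noncomputable section

open Polynomial Finset
open scoped commutatorElement

variable (p : ℕ) (F : Type*) [Field F]

lemma shiftAut_apply' {p : ℕ} (G : Type*) [Group G] (k : Multiplicative (ZMod p))
    (g : ZMod p → G) (i : ZMod p) :
    (shiftAut p G k) g i = g (i + Multiplicative.toAdd k) := rfl

/-- The shift operator `(Sop v) i = v (i - 1)` as an `F`-linear endomorphism. -/
def Sop : Module.End F (ZMod p → F) where
  toFun v i := v (i - 1)
  map_add' _ _ := rfl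
  map_smul' _ _ := rfl

/-- The difference operator `Δ = S - 1`. -/
def Dop : Module.End F (ZMod p → F) := Sop p F - 1

lemma Sop_pow_apply (n : ℕ) (v : ZMod p → F) (i : ZMod p) :
    ((Sop p F ^ n) v) i = v (i - n) := by
  induction n generalizing v i with
  | zero => simp
  | succ n ih =>
    rw [pow_succ, Module.End.mul_apply, ih]
    show v (i - (n : ZMod p) - 1) = _
    congr 1
    push_cast
    ring

lemma Dop_apply (v : ZMod p → F) (i : ZMod p) : Dop p F v i = v (i - 1) - v i := by
  simp [Dop, Sop]

lemma inlF_zero : inlF p F 0 = 1 := by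
  have : (fun i : ZMod p => Multiplicative.ofAdd ((0 : ZMod p → F) i)) = 1 := rfl
  rw [inlF, this, map_one]

lemma inlF_add (v w : ZMod p → F) : inlF p F (v + w) = inlF p F v * inlF p F w := by
  rw [inlF, inlF, inlF, ← map_mul]
  rfl

lemma inlF_neg (v : ZMod p → F) : inlF p F (-v) = (inlF p F v)⁻¹ := by
  rw [eq_inv_iff_mul_eq_one, ← inlF_add, neg_add_cancel, inlF_zero]

lemma inlF_left (v : ZMod p → F) (i : ZMod p) :
    (inlF p F v).left i = Multiplicative.ofAdd (v i) := rfl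

lemma inlF_right (v : ZMod p → F) : (inlF p F v).right = 1 := rfl

/-- The general commutator formula in `W p (Multiplicative F)`. -/
lemma comm_formula (x y : W p (Multiplicative F)) :
    ⁅x, y⁆ = inlF p F (fun i =>
      (Multiplicative.toAdd (x.left i)
        - Multiplicative.toAdd (x.left (i + Multiplicative.toAdd y.right)))
      + (Multiplicative.toAdd (y.left (i + Multiplicative.toAdd x.right))
        - Multiplicative.toAdd (y.left i))) := by
  have hr : (⁅x, y⁆ : W p (Multiplicative F)).right = 1 := by
    simp only [commutatorElement_def, SemidirectProduct.mul_right, SemidirectProduct.inv_right]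
    rw [mul_comm x.right y.right]
    group
  ext i
  · show (⁅x, y⁆ : W p (Multiplicative F)).left i = _
    simp only [commutatorElement_def, SemidirectProduct.mul_left, SemidirectProduct.inv_left,
      SemidirectProduct.mul_right, SemidirectProduct.inv_right, shiftAut_apply', inlF, inlW,
      SemidirectProduct.left_inl, Pi.mul_apply, Pi.inv_apply, Pi.one_apply, inv_one, one_mul,
      mul_one, toAdd_inv, toAdd_mul, toAdd_one, add_zero, neg_add_rev, neg_neg,
      MulAut.one_apply, map_one]
    have h1 : i + (Multiplicative.toAdd x.right + Multiplicative.toAdd y.right)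
        + (-Multiplicative.toAdd y.right + -Multiplicative.toAdd x.right
            + Multiplicative.toAdd x.right)
        = i + Multiplicative.toAdd x.right := by ring
    have h2 : i + (Multiplicative.toAdd x.right + Multiplicative.toAdd y.right)
        + (-Multiplicative.toAdd y.right + -Multiplicative.toAdd x.right) = i := by ring
    have h3 : i + (Multiplicative.toAdd x.right + Multiplicative.toAdd y.right)
        + -Multiplicative.toAdd x.right = i + Multiplicative.toAdd y.right := by ring
    have h4 : i + Multiplicative.toAdd y.right + -Multiplicative.toAdd y.right = i := by ring
    simp only [h1, h2, h3, h4]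
    apply Multiplicative.toAdd.injective
    simp only [toAdd_mul, toAdd_inv, toAdd_div, toAdd_ofAdd]
    abel_nf
    simp only [neg_one_zsmul, add_neg_cancel_right]
    rfl
  · rw [hr, inlF_right]

lemma comm_sigma_inv (v : ZMod p → F) :
    ⁅inlF p F v, (sigma p (Multiplicative F))⁻¹⁆ = inlF p F (-(Dop p F v)) := by
  rw [comm_formula]
  congr 1
  funext i
  simp only [inlF_left, inlF_right, toAdd_ofAdd, toAdd_one, add_zero, sigma,
    SemidirectProduct.left_inr, SemidirectProduct.inv_left, SemidirectProduct.inv_right,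
    SemidirectProduct.right_inr, toAdd_inv, toAdd_ofAdd, Pi.neg_apply, Dop_apply,
    Pi.one_apply, toAdd_one, map_one, MulAut.one_apply, Pi.inv_apply, inv_one]
  rw [sub_eq_add_neg i 1]
  ring

/-- Lower bound: `inlF (Δ^n v) ∈ γ_{n+1}`. -/
lemma pow_mem_lcs (n : ℕ) (v : ZMod p → F) :
    inlF p F ((Dop p F ^ n) v) ∈ Subgroup.lowerCentralSeries (⊤ : Subgroup (W p (Multiplicative F))) n := by
  induction n generalizing v with
  | zero => trivial
  | succ n ih =>
    have key : inlF p F ((Dop p F ^ (n + 1)) v)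
        = ⁅inlF p F ((Dop p F ^ n) (-v)), (sigma p (Multiplicative F))⁻¹⁆ := by
      rw [comm_sigma_inv]
      congr 1
      rw [map_neg, map_neg, neg_neg, pow_succ']
      rfl
    rw [key]
    exact Subgroup.commutator_mem_commutator (ih _) (Subgroup.mem_top _)

/-- The subgroup `{ inlF (Δ^n w) | w }`. -/
def Hsub (n : ℕ) : Subgroup (W p (Multiplicative F)) where
  carrier := {x | ∃ w, x = inlF p F ((Dop p F ^ n) w)}
  one_mem' := ⟨0, by rw [map_zero, inlF_zero]⟩
  mul_mem' := by
    rintro x y ⟨v, rfl⟩ ⟨w, rfl⟩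
    exact ⟨v + w, by rw [map_add, inlF_add]⟩
  inv_mem' := by
    rintro x ⟨v, rfl⟩
    exact ⟨-v, by rw [map_neg, inlF_neg]⟩

lemma mem_Hsub {n : ℕ} {x : W p (Multiplicative F)} :
    x ∈ Hsub p F n ↔ ∃ w, x = inlF p F ((Dop p F ^ n) w) := Iff.rfl

/-- `Φ_b - 1` is a left multiple of `Δ` (commuting with everything in sight). -/
lemma phi_sub_one [Fact p.Prime] (b : ZMod p) :
    ∃ u : Module.End F (ZMod p → F),
      (∀ v : ZMod p → F, ∀ i, v (i + b) - v i = (Dop p F * u) v i) ∧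
        Commute u (Dop p F) := by
  refine ⟨∑ j ∈ range (-b).val, Sop p F ^ j, fun v i => ?_, ?_⟩
  · have h : (Dop p F * ∑ j ∈ range (-b).val, Sop p F ^ j)
        = Sop p F ^ (-b).val - 1 := by
      rw [Dop, mul_geom_sum]
    rw [h]
    have : ((Sop p F ^ (-b).val - 1) v) i = ((Sop p F ^ (-b).val) v) i - v i := rfl
    rw [this, Sop_pow_apply]
    congr 2
    rw [ZMod.natCast_val, ZMod.cast_id, sub_neg_eq_add]
  · exact Commute.sum_left _ _ _ fun j _ =>
      ((Commute.refl (Sop p F)).sub_right (Commute.one_right _)).pow_left j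

lemma comm_mem_Hsub_one [Fact p.Prime] (x y : W p (Multiplicative F)) :
    ⁅x, y⁆ ∈ Hsub p F 1 := by
  obtain ⟨u, hu, -⟩ := phi_sub_one p F (Multiplicative.toAdd y.right)
  obtain ⟨u', hu', -⟩ := phi_sub_one p F (Multiplicative.toAdd x.right)
  refine ⟨-(u fun i => Multiplicative.toAdd (x.left i))
    + (u' fun i => Multiplicative.toAdd (y.left i)), ?_⟩
  rw [comm_formula]
  congr 1
  funext i
  have h1 := hu (fun i => Multiplicative.toAdd (x.left i)) i
  have h2 := hu' (fun i => Multiplicative.toAdd (y.left i)) i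
  rw [Module.End.mul_apply] at h1 h2
  rw [pow_one, map_add, map_neg]
  simp only [Pi.add_apply, Pi.neg_apply]
  rw [← h1, ← h2]
  ring

lemma comm_mem_Hsub_succ [Fact p.Prime] (n : ℕ) (x y : W p (Multiplicative F))
    (hx : x ∈ Hsub p F n) : ⁅x, y⁆ ∈ Hsub p F (n + 1) := by
  obtain ⟨w, rfl⟩ := hx
  obtain ⟨u, hu, hcomm⟩ := phi_sub_one p F (Multiplicative.toAdd y.right)
  refine ⟨-(u w), ?_⟩
  rw [comm_formula]
  congr 1
  funext i
  simp only [inlF_left, inlF_right, toAdd_ofAdd, toAdd_one, add_zero, sub_self]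
  have h1 : ((Dop p F ^ n) w) (i + Multiplicative.toAdd y.right) - ((Dop p F ^ n) w) i
      = (Dop p F * u) ((Dop p F ^ n) w) i := hu _ i
  have h2 : (Dop p F * u) ((Dop p F ^ n) w) = (Dop p F ^ (n+1)) (u w) := by
    rw [← Module.End.mul_apply, ← Module.End.mul_apply, mul_assoc,
      hcomm.pow_right n, ← mul_assoc, ← pow_succ']
  rw [map_neg]
  simp only [Pi.neg_apply]
  rw [← h2, ← h1]
  ring

lemma lcs_le_Hsub [Fact p.Prime] (n : ℕ) :
    Subgroup.lowerCentralSeries (⊤ : Subgroup (W p (Multiplicative F))) (n + 1) ≤ Hsub p F (n + 1) := by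
  induction n with
  | zero =>
    have hdef : Subgroup.lowerCentralSeries (⊤ : Subgroup (W p (Multiplicative F))) 1
        = ⁅(⊤ : Subgroup (W p (Multiplicative F))), ⊤⁆ := rfl
    rw [hdef]
    exact Subgroup.commutator_le.mpr fun g _ h _ => comm_mem_Hsub_one p F g h
  | succ n ih =>
    have hdef : Subgroup.lowerCentralSeries (⊤ : Subgroup (W p (Multiplicative F))) (n + 2)
        = ⁅Subgroup.lowerCentralSeries (⊤ : Subgroup (W p (Multiplicative F))) (n + 1), ⊤⁆ := rfl
    rw [hdef]
    exact Subgroup.commutator_le.mpr fun g hg h _ =>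
      comm_mem_Hsub_succ p F (n + 1) g h (ih hg)

lemma Dop_pow_card [Fact p.Prime] [CharP F p] :
    Dop p F ^ (p - 1) = ∑ k ∈ range p, Sop p F ^ k := by
  have hp : p.Prime := Fact.out
  have hX : ((X : F[X]) - 1) ^ (p - 1) = ∑ k ∈ range p, X ^ k := by
    have h1 : ((X : F[X]) - 1) * ((X - 1) ^ (p - 1)) = (X - 1) ^ p := by
      have h2p := (Fact.out : p.Prime).two_le
      rw [← pow_succ']
      congr 1
      omega
    have h2 : ((X : F[X]) - 1) ^ p = (X - 1) * ∑ k ∈ range p, X ^ k := by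
      rw [sub_pow_char, one_pow, mul_comm, geom_sum_mul]
    have hne : ((X : F[X]) - 1) ≠ 0 := by
      rw [← Polynomial.C_1]
      exact Polynomial.X_sub_C_ne_zero 1
    exact mul_left_cancel₀ hne (h1.trans h2)
  have h4 : (Polynomial.aeval (Sop p F)) (((X : F[X]) - 1) ^ (p - 1)) = Dop p F ^ (p - 1) := by
    rw [map_pow, map_sub, Polynomial.aeval_X, map_one, Dop]
  have h5 : (Polynomial.aeval (Sop p F)) (∑ k ∈ range p, (X : F[X]) ^ k)
      = ∑ k ∈ range p, Sop p F ^ k := by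
    rw [map_sum]
    simp only [map_pow, Polynomial.aeval_X]
  rw [← h4, hX, h5]

lemma Dop_pow_card_apply [Fact p.Prime] [CharP F p] (w : ZMod p → F) :
    (Dop p F ^ (p - 1)) w = fun _ => ∑ j : ZMod p, w j := by
  funext i
  rw [Dop_pow_card, LinearMap.sum_apply, Finset.sum_apply]
  have h1 : ∀ k ∈ range p, ((Sop p F ^ k) w) i = w (i - k) := fun k _ => Sop_pow_apply p F k w i
  rw [Finset.sum_congr rfl h1]
  refine Finset.sum_nbij' (i := fun k => i - (k : ZMod p)) (j := fun z => (i - z).val)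
    ?_ ?_ ?_ ?_ ?_
  · intro a _; exact Finset.mem_univ _
  · intro a _; exact Finset.mem_range.mpr (ZMod.val_lt _)
  · intro a ha
    rw [Finset.mem_range] at ha
    simp only [sub_sub_cancel, ZMod.val_natCast_of_lt ha]
  · intro a _
    simp only [ZMod.natCast_val, ZMod.cast_id, sub_sub_cancel]
  · intro a _; rfl

end
end GGS

open GGS

/-- γ_p(W(F)) = { (λ,λ,…,λ) : λ ∈ F } is the set of constant tuples in B(F).
    (γ_p(W(F)) = `lowerCentralSeries (W p (Multiplicative F)) (p-1)`.) -/
theorem statement4 (p : ℕ) [Fact p.Prime] (hp : Odd p)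
    (F : Type*) [Field F] [Fintype F] [CharP F p] :
    ((Subgroup.lowerCentralSeries (⊤ : Subgroup (W p (Multiplicative F))) (p - 1) :
        Subgroup (W p (Multiplicative F))) : Set (W p (Multiplicative F)))
      = {x : W p (Multiplicative F) | ∃ c : F, x = inlF p F (fun _ => c)} := by
  have hp2 : 2 ≤ p := (Fact.out : p.Prime).two_le
  ext x
  simp only [SetLike.mem_coe, Set.mem_setOf_eq]
  constructor
  · intro hx
    have hsplit : p - 1 = (p - 2) + 1 := by omega
    rw [hsplit] at hx
    obtain ⟨w, rfl⟩ := lcs_le_Hsub p F (p - 2) hx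
    refine ⟨∑ j : ZMod p, w j, ?_⟩
    rw [← hsplit, Dop_pow_card_apply]
  · rintro ⟨c, rfl⟩
    have h : (fun _ : ZMod p => c)
        = (Dop p F ^ (p - 1)) (fun j => if j = 0 then c else 0) := by
      rw [Dop_pow_card_apply]
      funext i
      simp
    rw [h]
    exact pow_mem_lcs p F (p - 1) _
end

section
/- For a tuple λ = (λ_0,…,λ_{p−1}) ∈ B(F): λ ∈ γ_2(W(F)) if and only if λ_0 + λ_1 + ⋯ + λ_{p−1} = 0; and λ ∈ γ_3(W(F)) if and only if both λ_0 + λ_1 + ⋯ + λ_{p−1} = 0 and λ_0 + 2λ_1 + 3λ_2 + ⋯ + (p−1)λ_{p−2} = 0. -/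
open Pointwise

open GGS


open GGS
open scoped commutatorElement

-- basic sandbox checks
example (p : ℕ) [Fact p.Prime] : NeZero p := inferInstance

lemma st6_shift_apply (p : ℕ) (G : Type*) [Group G] (k : Multiplicative (ZMod p))
    (g : ZMod p → G) (i : ZMod p) : shiftAut p G k g i = g (i + k.toAdd) := rfl

lemma st6_sum_cast {p : ℕ} [NeZero p] {M : Type*} [AddCommMonoid M] (f : ZMod p → M) :
    ∑ r ∈ Finset.range p, f (r : ZMod p) = ∑ i : ZMod p, f i := by
  rw [← Fin.sum_univ_eq_sum_range]
  exact Function.Bijective.sum_comp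
    ⟨fun a b hab => Fin.ext (by
        have := congrArg ZMod.val hab
        rwa [ZMod.val_cast_of_lt a.isLt, ZMod.val_cast_of_lt b.isLt] at this),
      fun i => ⟨⟨i.val, ZMod.val_lt i⟩, by simp [ZMod.natCast_val, ZMod.cast_id]⟩⟩ f

lemma st6_shift_apply' (p : ℕ) (G : Type*) [Group G] (k : Multiplicative (ZMod p))
    (g : ZMod p → G) (i : ZMod p) : shiftAut p G k g i = g (i + k.toAdd) := rfl

lemma st6_conj (p : ℕ) (G : Type*) [CommGroup G] (u : ZMod p → G) (y : W p G) :
    y * SemidirectProduct.inl u * y⁻¹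
      = SemidirectProduct.inl (shiftAut p G y.right u) := by
  ext i
  · show (y.left * shiftAut p G y.right u) i * _ = _
    simp only [SemidirectProduct.mul_right, SemidirectProduct.right_inl, mul_one,
      SemidirectProduct.inv_left, SemidirectProduct.inv_right, SemidirectProduct.left_inl,
      Pi.mul_apply, st6_shift_apply']
    simp only [Pi.inv_apply, toAdd_inv, st6_shift_apply']
    rw [mul_comm (y.left i)]
    simp [mul_assoc, st6_shift_apply']
  · simp

lemma st6_comm_inl (p : ℕ) (G : Type*) [CommGroup G] (u : ZMod p → G) (y : W p G) :
    ⁅(SemidirectProduct.inl u : W p G), y⁆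
      = SemidirectProduct.inl (u * (shiftAut p G y.right u)⁻¹) := by
  rw [commutatorElement_def, mul_assoc, mul_assoc, ← mul_assoc y, ← map_inv,
    st6_conj, ← map_mul, map_inv]

lemma st6_lcs1_le_ker {G H : Type*} [Group G] [CommGroup H] (f : G →* H) :
    Subgroup.lowerCentralSeries (⊤ : Subgroup G) 1 ≤ f.ker := by
  rw [Subgroup.top_lowerCentralSeries_one, commutator_def]
  refine Subgroup.commutator_le.mpr fun g _ h _ => ?_
  rw [MonoidHom.mem_ker, map_commutatorElement]
  exact commutatorElement_eq_one_iff_commute.mpr (mul_comm _ _)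

noncomputable def st6Phi (p : ℕ) [NeZero p] (F : Type*) [AddCommGroup F] :
    W p (Multiplicative F) →* Multiplicative F :=
  MonoidHom.mk' (fun x => Multiplicative.ofAdd (∑ i, (x.left i).toAdd)) (by
    intro x y
    rw [← ofAdd_add]
    congr 1
    show ∑ i, ((x.left * shiftAut p (Multiplicative F) x.right y.left) i).toAdd = _
    simp only [Pi.mul_apply, toAdd_mul, Finset.sum_add_distrib, st6_shift_apply']
    congr 1
    exact Equiv.sum_comp (Equiv.addRight x.right.toAdd) (fun i => (y.left i).toAdd))

lemma st6_double {F : Type*} [CommRing F] (f : ℕ → F) (n : ℕ) :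
    ∑ r ∈ Finset.range n, ∑ j ∈ Finset.range r, f j
      = ∑ j ∈ Finset.range n, ((n : F) - 1 - (j : F)) * f j := by
  induction n with
  | zero => simp
  | succ n ih =>
    rw [Finset.sum_range_succ, ih, Finset.sum_range_succ]
    push_cast
    rw [← Finset.sum_add_distrib, show ((n:F) + 1 - 1 - (n:F)) * f n = 0 by ring, add_zero]
    exact Finset.sum_congr rfl fun j _ => by ring

lemma st6_neg_one_cast (p : ℕ) [Fact p.Prime] : ((p - 1 : ℕ) : ZMod p) = -1 := by
  have hp : 1 ≤ p := (Fact.out : p.Prime).one_lt.le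
  rw [Nat.cast_sub hp, ZMod.natCast_self, Nat.cast_one, zero_sub]

lemma st6_tele (p : ℕ) [Fact p.Prime] {F : Type*} [AddCommGroup F] (v : ZMod p → F)
    (hv : ∑ i : ZMod p, v i = 0) (i : ZMod p) :
    (-∑ j ∈ Finset.range i.val, v (j : ZMod p))
      - (-∑ j ∈ Finset.range (i+1).val, v (j : ZMod p)) = v i := by
  have hppos : 0 < p := (Fact.out : p.Prime).pos
  rcases eq_or_ne i (-1) with hi | hi
  · subst hi
    have hval : (-1 : ZMod p).val = p - 1 := by
      rw [← st6_neg_one_cast p, ZMod.val_cast_of_lt (Nat.sub_lt hppos one_pos)]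
    have h0 : (-1 + 1 : ZMod p).val = 0 := by rw [neg_add_cancel, ZMod.val_zero]
    rw [hval, h0]
    have := st6_sum_cast (fun i : ZMod p => v i)
    rw [hv, show Finset.range p = Finset.range ((p-1)+1) by
        rw [Nat.sub_add_cancel hppos],
      Finset.sum_range_succ, st6_neg_one_cast p] at this
    simp only [Finset.sum_range_zero, neg_zero, sub_zero]
    linear_combination (norm := abel) -this
  · have hival : i.val ≠ p - 1 := by
      intro h
      apply hi
      rw [← ZMod.natCast_rightInverse i, h, st6_neg_one_cast p]
    have hlt : i.val + 1 < p := by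
      have := ZMod.val_lt i
      omega
    have h2 : (i + 1).val = i.val + 1 := by
      rw [show i + 1 = ((i.val + 1 : ℕ) : ZMod p) by
          push_cast [ZMod.natCast_rightInverse i]; ring,
        ZMod.val_cast_of_lt hlt]
    rw [h2, Finset.sum_range_succ, ZMod.natCast_rightInverse i]
    abel

lemma st6_range_to_univ (p : ℕ) [Fact p.Prime] (F : Type*) [Field F] [CharP F p]
    (v : ZMod p → F) :
    ∑ r ∈ Finset.range p, ((r:F)+1) * v (r : ZMod p)
      = ∑ i : ZMod p, ((ZMod.castHom (dvd_refl p) F i : F) + 1) * v i := by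
  rw [← st6_sum_cast (fun i : ZMod p => ((ZMod.castHom (dvd_refl p) F i : F) + 1) * v i)]
  exact Finset.sum_congr rfl fun r _ => by rw [map_natCast]

lemma st6_bridge (p : ℕ) [Fact p.Prime] (F : Type*) [Field F] [CharP F p] (v : ZMod p → F) :
    ∑ r ∈ Finset.range (p-1), ((r:F)+1) * v (r : ZMod p)
      = ∑ i : ZMod p, ((ZMod.castHom (dvd_refl p) F i : F) + 1) * v i := by
  have hppos : 0 < p := (Fact.out : p.Prime).pos
  rw [← st6_range_to_univ, show Finset.range p = Finset.range ((p-1)+1) by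
      rw [Nat.sub_add_cancel hppos], Finset.sum_range_succ,
    show (((p-1:ℕ)):F) + 1 = 0 by
      rw [Nat.cast_sub hppos, CharP.cast_eq_zero F p]; ring,
    zero_mul, add_zero]

lemma st6_L_shift (p : ℕ) [Fact p.Prime] (F : Type*) [Field F] [CharP F p]
    (u : ZMod p → F) (hu : ∑ i : ZMod p, u i = 0) (t : ZMod p) :
    ∑ i : ZMod p, ((ZMod.castHom (dvd_refl p) F i : F) + 1) * u (i + t)
      = ∑ i : ZMod p, ((ZMod.castHom (dvd_refl p) F i : F) + 1) * u i := by
  have hre : ∀ g : ZMod p → F, ∑ i : ZMod p, g (i + t) = ∑ i, g i := fun g =>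
    Equiv.sum_comp (Equiv.addRight t) g
  rw [← hre (fun j => ((ZMod.castHom (dvd_refl p) F j : F) + 1) * u j)]
  rw [← sub_eq_zero, ← Finset.sum_sub_distrib]
  have : ∀ i : ZMod p,
      ((ZMod.castHom (dvd_refl p) F i : F) + 1) * u (i + t)
        - ((ZMod.castHom (dvd_refl p) F (i + t) : F) + 1) * u (i + t)
      = -((ZMod.castHom (dvd_refl p) F t : F) * u (i + t)) := by
    intro i; rw [map_add]; ring
  simp_rw [this]
  rw [Finset.sum_neg_distrib, ← Finset.mul_sum, hre, hu, mul_zero, neg_zero]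

lemma st6_sum_u (p : ℕ) [Fact p.Prime] (F : Type*) [Field F] [CharP F p] (v : ZMod p → F) :
    ∑ i : ZMod p, (-∑ j ∈ Finset.range i.val, v (j : ZMod p))
      = ∑ i : ZMod p, ((ZMod.castHom (dvd_refl p) F i : F) + 1) * v i := by
  have hcongr : ∑ r ∈ Finset.range p, ∑ j ∈ Finset.range ((r : ZMod p)).val, v (j : ZMod p)
      = ∑ r ∈ Finset.range p, ∑ j ∈ Finset.range r, v (j : ZMod p) :=
    Finset.sum_congr rfl fun r hr => by
      rw [ZMod.val_cast_of_lt (Finset.mem_range.mp hr)]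
  rw [Finset.sum_neg_distrib,
    ← st6_sum_cast (fun i : ZMod p => ∑ j ∈ Finset.range i.val, v (j : ZMod p)),
    hcongr, st6_double, ← st6_range_to_univ, ← Finset.sum_neg_distrib]
  refine Finset.sum_congr rfl fun j _ => ?_
  rw [CharP.cast_eq_zero F p]
  ring

noncomputable def st6N2 (p : ℕ) [Fact p.Prime] (F : Type*) [Field F] [CharP F p] :
    Subgroup (W p (Multiplicative F)) where
  carrier := {x | x.right = 1 ∧ (∑ i, (x.left i).toAdd) = 0 ∧
      ∑ i : ZMod p, ((ZMod.castHom (dvd_refl p) F i : F) + 1) * (x.left i).toAdd = 0}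
  one_mem' := by
    refine ⟨rfl, ?_, ?_⟩ <;> simp [SemidirectProduct.one_left]
  mul_mem' := by
    rintro a b ⟨ha1, ha2, ha3⟩ ⟨hb1, hb2, hb3⟩
    have hl : (a * b).left = a.left * b.left := by
      rw [SemidirectProduct.mul_left, ha1, map_one]; rfl
    refine ⟨by rw [SemidirectProduct.mul_right, ha1, hb1, mul_one], ?_, ?_⟩
    · rw [hl]
      simp only [Pi.mul_apply, toAdd_mul, Finset.sum_add_distrib, ha2, hb2, add_zero]
    · rw [hl]
      simp only [Pi.mul_apply, toAdd_mul, mul_add, Finset.sum_add_distrib, ha3, hb3, add_zero]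
  inv_mem' := by
    rintro a ⟨ha1, ha2, ha3⟩
    have hl : a⁻¹.left = a.left⁻¹ := by
      rw [SemidirectProduct.inv_left, ha1, inv_one, map_one]; rfl
    refine ⟨by rw [SemidirectProduct.inv_right, ha1, inv_one], ?_, ?_⟩
    · rw [hl]
      simp only [Pi.inv_apply, toAdd_inv, Finset.sum_neg_distrib, ha2, neg_zero]
    · rw [hl]
      simp only [Pi.inv_apply, toAdd_inv, mul_neg, Finset.sum_neg_distrib, ha3, neg_zero]

lemma st6_key (p : ℕ) [Fact p.Prime] (F : Type*) [Field F] [CharP F p] (v : ZMod p → F)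
    (hv : ∑ i : ZMod p, v i = 0) :
    inlF p F v
      = ⁅inlF p F (fun i => -∑ j ∈ Finset.range i.val, v (j : ZMod p)),
          sigma p (Multiplicative F)⁆ := by
  show SemidirectProduct.inl _ = ⁅(SemidirectProduct.inl _ : W p (Multiplicative F)), _⁆
  rw [st6_comm_inl, SemidirectProduct.inl_inj]
  funext i
  show Multiplicative.ofAdd (v i) = _ * ((shiftAut p (Multiplicative F) _ _) i)⁻¹
  rw [st6_shift_apply']
  show Multiplicative.ofAdd (v i)
    = Multiplicative.ofAdd (-∑ j ∈ Finset.range i.val, v (j : ZMod p))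
      * (Multiplicative.ofAdd (-∑ j ∈ Finset.range
          ((i + (Multiplicative.ofAdd (1 : ZMod p)).toAdd).val), v (j : ZMod p)))⁻¹
  rw [← ofAdd_neg, ← ofAdd_add]
  congr 1
  rw [toAdd_ofAdd, ← st6_tele p v hv i]
  ring

lemma st6_mem_lcs1 (p : ℕ) [Fact p.Prime] (F : Type*) [Field F] [CharP F p] (v : ZMod p → F)
    (hv : ∑ i : ZMod p, v i = 0) :
    inlF p F v ∈ Subgroup.lowerCentralSeries (⊤ : Subgroup (W p (Multiplicative F))) 1 := by
  rw [st6_key p F v hv]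
  exact Subgroup.commutator_mem_commutator (Subgroup.mem_top _) (Subgroup.mem_top _)


/-- λ ∈ γ_2(W(F)) iff λ₀+⋯+λ_{p−1} = 0, and λ ∈ γ_3(W(F)) iff additionally
    λ₀ + 2λ₁ + ⋯ + (p−1)λ_{p−2} = 0.
    (γ_i(W(F)) = `lowerCentralSeries (W p (Multiplicative F)) (i-1)`.) -/
theorem statement6 (p : ℕ) [Fact p.Prime] (hp : Odd p)
    (F : Type*) [Field F] [Fintype F] [CharP F p] (v : ZMod p → F) :
    (inlF p F v ∈ Subgroup.lowerCentralSeries (⊤ : Subgroup (W p (Multiplicative F))) 1 ↔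
      ∑ j : ZMod p, v j = 0)
    ∧ (inlF p F v ∈ Subgroup.lowerCentralSeries (⊤ : Subgroup (W p (Multiplicative F))) 2 ↔
      (∑ j : ZMod p, v j = 0 ∧
        ∑ r ∈ Finset.range (p - 1), ((r : F) + 1) * v (r : ZMod p) = 0)) := by
  have hL := st6_bridge p F v
  constructor
  · constructor
    · intro h
      have hk := st6_lcs1_le_ker (st6Phi p F) h
      rw [MonoidHom.mem_ker] at hk
      have h2 := congrArg Multiplicative.toAdd hk
      simpa [st6Phi, inlF, inlW] using h2
    · exact st6_mem_lcs1 p F v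
  · constructor
    · intro h
      have hsub : Subgroup.lowerCentralSeries (⊤ : Subgroup (W p (Multiplicative F))) 2 ≤ st6N2 p F := by
        show ⁅Subgroup.lowerCentralSeries (⊤ : Subgroup (W p (Multiplicative F))) 1, ⊤⁆ ≤ st6N2 p F
        refine Subgroup.commutator_le.mpr fun g hg y _ => ?_
        have hgr : g.right = 1 := st6_lcs1_le_ker (SemidirectProduct.rightHom) hg
        have hgs : ∑ i, (g.left i).toAdd = 0 := by
          have hk := st6_lcs1_le_ker (st6Phi p F) hg
          rw [MonoidHom.mem_ker] at hk
          have h2 := congrArg Multiplicative.toAdd hk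
          simpa [st6Phi] using h2
        have hgeq : g = SemidirectProduct.inl g.left := SemidirectProduct.ext rfl hgr
        rw [hgeq, st6_comm_inl]
        have hre : ∑ i : ZMod p, (g.left (i + Multiplicative.toAdd y.right)).toAdd
            = ∑ i : ZMod p, (g.left i).toAdd :=
          Equiv.sum_comp (Equiv.addRight (Multiplicative.toAdd y.right))
            (fun i => (g.left i).toAdd)
        have hshift : (∑ i : ZMod p, ((ZMod.castHom (dvd_refl p) F i : F) + 1)
              * (g.left (i + Multiplicative.toAdd y.right)).toAdd)
            = ∑ i : ZMod p, ((ZMod.castHom (dvd_refl p) F i : F) + 1) * (g.left i).toAdd :=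
          st6_L_shift p F (fun i => (g.left i).toAdd) hgs (Multiplicative.toAdd y.right)
        refine ⟨SemidirectProduct.right_inl _, ?_, ?_⟩
        · show ∑ i : ZMod p,
              ((g.left * (shiftAut p (Multiplicative F) y.right g.left)⁻¹) i).toAdd = 0
          simp only [Pi.mul_apply, Pi.inv_apply, toAdd_mul, toAdd_inv, st6_shift_apply']
          rw [Finset.sum_add_distrib, Finset.sum_neg_distrib, hre, hgs, neg_zero, add_zero]
        · show ∑ i : ZMod p, ((ZMod.castHom (dvd_refl p) F i : F) + 1)
              * ((g.left * (shiftAut p (Multiplicative F) y.right g.left)⁻¹) i).toAdd = 0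
          simp only [Pi.mul_apply, Pi.inv_apply, toAdd_mul, toAdd_inv, st6_shift_apply',
            mul_add, mul_neg]
          rw [Finset.sum_add_distrib, Finset.sum_neg_distrib, hshift, add_neg_cancel]
      obtain ⟨-, h2, h3⟩ := hsub h
      constructor
      · simpa [inlF, inlW] using h2
      · rw [hL]
        simpa [inlF, inlW] using h3
    · rintro ⟨hv, hL2⟩
      have hLv : ∑ i : ZMod p, ((ZMod.castHom (dvd_refl p) F i : F) + 1) * v i = 0 := by
        rw [← hL]; exact hL2
      have hu : ∑ i : ZMod p, (-∑ j ∈ Finset.range i.val, v (j : ZMod p)) = 0 := by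
        rw [st6_sum_u]; exact hLv
      rw [st6_key p F v hv]
      show _ ∈ ⁅Subgroup.lowerCentralSeries (⊤ : Subgroup (W p (Multiplicative F))) 1, ⊤⁆
      exact Subgroup.commutator_mem_commutator
        (st6_mem_lcs1 p F (fun i => -∑ j ∈ Finset.range i.val, v (j : ZMod p)) hu)
        (Subgroup.mem_top _)
end

section
/- Let A be an elementary abelian finite p-group and let 1 ≤ i ≤ p. Then the map A → γ_i*(W(A))/γ_{i+1}*(W(A)) sending a to the coset of λ_i(a) is a group isomorphism; in particular the images of the tuples λ_i(a), a ∈ A, yield all elements of γ_i*(W(A))/γ_{i+1}*(W(A)) without repetitions. -/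
open Pointwise

open GGS

set_option linter.unusedSectionVars false

open scoped commutatorElement

section Aux
variable (p : ℕ) (A : Type*) [CommGroup A]

def Dm : Monoid.End (ZMod p → A) :=
  MonoidHom.mk' (fun g i => (g i)⁻¹ * g (i - 1)) (by
    intro g h
    funext i
    simp only [Pi.mul_apply, mul_inv]
    exact mul_mul_mul_comm _ _ _ _)

lemma Dm_apply (g : ZMod p → A) (i : ZMod p) : Dm p A g i = (g i)⁻¹ * g (i - 1) := rfl

lemma Delta_eq : Delta p A = ⇑(Dm p A) := by
  funext g i
  show ((inlW p A g)⁻¹ * (sigma p A)⁻¹ * inlW p A g * sigma p A).left i = (g i)⁻¹ * g (i - 1)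
  rw [inlW, sigma]
  simp only [SemidirectProduct.mul_left, SemidirectProduct.inv_left,
    SemidirectProduct.left_inl, SemidirectProduct.right_inl, SemidirectProduct.left_inr,
    SemidirectProduct.right_inr, SemidirectProduct.mul_right, SemidirectProduct.inv_right,
    map_one, map_inv, inv_one, one_mul, mul_one]
  simp [shiftAut, sub_eq_add_neg, Pi.mul_apply, MulAut.inv_def, MulEquiv.symm_mk]

end Aux

section Aux2
variable (p : ℕ) (A : Type*) [CommGroup A]

def Km (n : ℕ) : Subgroup (ZMod p → A) := ((Dm p A)^n).range

lemma mem_Km (n : ℕ) (g : ZMod p → A) : g ∈ Km p A n ↔ ∃ w, (⇑(Dm p A))^[n] w = g := by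
  rw [Km]
  exact Iff.rfl

/-- plain shift -/
def shf (c : ZMod p) (g : ZMod p → A) : ZMod p → A := fun i => g (i + c)

lemma shiftAut_eq (k : Multiplicative (ZMod p)) (g : ZMod p → A) :
    shiftAut p A k g = shf p A (Multiplicative.toAdd k) g := rfl

lemma Dm_shf (c : ZMod p) (g : ZMod p → A) :
    Dm p A (shf p A c g) = shf p A c (Dm p A g) := by
  funext i
  simp [Dm_apply, shf, sub_add_eq_add_sub]

lemma shf_mem_Km {n : ℕ} (c : ZMod p) {g : ZMod p → A} (hg : g ∈ Km p A n) :
    shf p A c g ∈ Km p A n := by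
  rw [mem_Km] at hg ⊢
  obtain ⟨w, rfl⟩ := hg
  refine ⟨shf p A c w, ?_⟩
  induction n with
  | zero => rfl
  | succ n ih => rw [Function.iterate_succ_apply', Function.iterate_succ_apply', ih, Dm_shf]

lemma Km_succ_of_Dm {n : ℕ} {g : ZMod p → A} (hg : g ∈ Km p A n) :
    Dm p A g ∈ Km p A (n + 1) := by
  rw [mem_Km] at hg ⊢
  obtain ⟨w, rfl⟩ := hg
  exact ⟨w, Function.iterate_succ_apply' _ _ _⟩

lemma div_shf_one (g : ZMod p → A) : g * (shf p A 1 g)⁻¹ = Dm p A (shf p A 1 g) := by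
  funext i
  simp [Dm_apply, shf, Pi.mul_apply, sub_add_cancel]
  exact mul_comm _ _

lemma div_shf_mem {n : ℕ} {g : ZMod p → A} (hg : g ∈ Km p A n) (k : ℕ) :
    g * (shf p A (k : ZMod p) g)⁻¹ ∈ Km p A (n + 1) := by
  induction k with
  | zero =>
      have : shf p A ((0 : ℕ) : ZMod p) g = g := by funext i; simp [shf]
      rw [this, mul_inv_cancel]
      exact one_mem _
  | succ k ih =>
      have key : g * (shf p A ((k+1 : ℕ) : ZMod p) g)⁻¹
          = (g * (shf p A (k : ZMod p) g)⁻¹) * shf p A (k : ZMod p) (g * (shf p A 1 g)⁻¹) := by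
        funext i
        simp only [Pi.mul_apply, Pi.inv_apply, shf]
        push_cast
        rw [show i + ((k : ZMod p) + 1) = i + (k : ZMod p) + 1 by ring]
        group
      rw [key]
      refine mul_mem ih ?_
      refine shf_mem_Km p A _ ?_
      rw [div_shf_one]
      exact Km_succ_of_Dm p A (shf_mem_Km p A _ hg)

lemma inl_commutator (u : ZMod p → A) (x : W p A) :
    ⁅inlW p A u, x⁆ = inlW p A (u * (shiftAut p A x.right u)⁻¹) := by
  apply SemidirectProduct.ext
  · simp only [commutatorElement_def, inlW, SemidirectProduct.mul_left,
      SemidirectProduct.inv_left, SemidirectProduct.left_inl, SemidirectProduct.right_inl,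
      SemidirectProduct.mul_right, SemidirectProduct.inv_right, map_mul, map_inv,
      one_mul, mul_one, inv_one, map_one]
    funext i
    simp [Pi.mul_apply, Pi.inv_apply, mul_comm, mul_assoc, mul_left_comm]
  · simp only [commutatorElement_def, inlW, SemidirectProduct.mul_right,
      SemidirectProduct.inv_right, SemidirectProduct.right_inl, one_mul, mul_one]
    group

end Aux2

section Aux3
variable (p : ℕ) [NeZero p] (A : Type*) [CommGroup A]

lemma inl_Dm_eq_commutator (g : ZMod p → A) :
    inlW p A (Dm p A g) = ⁅(inlW p A g)⁻¹, (sigma p A)⁻¹⁆ := by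
  rw [← Delta_eq]
  apply SemidirectProduct.ext
  · show Delta p A g = (((inlW p A g)⁻¹ * (sigma p A)⁻¹ * ((inlW p A g)⁻¹)⁻¹ * ((sigma p A)⁻¹)⁻¹)).left
    rw [inv_inv, inv_inv]
    rfl
  · simp only [commutatorElement_def, inlW, sigma, SemidirectProduct.mul_right,
      SemidirectProduct.inv_right, SemidirectProduct.right_inl, SemidirectProduct.right_inr]
    group

lemma gammaStar_eq (n : ℕ) : gammaStar p A n = Subgroup.map (inlW p A) (Km p A n) := by
  induction n with
  | zero =>
      show baseW p A = _
      rw [baseW]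
      have : Km p A 0 = ⊤ := by
        ext g; simp [mem_Km]
      rw [this, ← MonoidHom.range_eq_map]
  | succ n ih =>
      apply le_antisymm
      · show ⁅gammaStar p A n, (⊤ : Subgroup (W p A))⁆ ≤ _
        rw [Subgroup.commutator_le]
        intro g hg x _
        rw [ih] at hg
        obtain ⟨u, hu, rfl⟩ := hg
        rw [inl_commutator]
        apply Subgroup.mem_map_of_mem
        rw [shiftAut_eq]
        have hk : ((Multiplicative.toAdd x.right).val : ZMod p) = Multiplicative.toAdd x.right :=
          ZMod.natCast_rightInverse _
        rw [← hk]
        exact div_shf_mem p A hu _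
      · intro x hx
        obtain ⟨g, hg, rfl⟩ := hx
        rw [SetLike.mem_coe, mem_Km] at hg
        obtain ⟨w, rfl⟩ := hg
        rw [Function.iterate_succ_apply']
        rw [inl_Dm_eq_commutator]
        show _ ∈ ⁅gammaStar p A n, (⊤ : Subgroup (W p A))⁆
        refine Subgroup.commutator_mem_commutator (inv_mem ?_) (Subgroup.mem_top _)
        rw [ih]
        exact Subgroup.mem_map_of_mem _ ((mem_Km p A n _).2 ⟨w, rfl⟩)

end Aux3

section Aux4
variable (p : ℕ) [NeZero p] (A : Type*) [CommGroup A]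

abbrev V := ZMod p → Additive A

def sE : AddMonoid.End (V p A) :=
  AddMonoidHom.mk' (fun v i => v (i - 1)) (fun v w => rfl)

def dE : AddMonoid.End (V p A) :=
  AddMonoidHom.mk' (fun v i => v (i - 1) - v i) (by
    intro v w
    funext i
    show (v + w) (i-1) - (v + w) i = (v (i-1) - v i) + (w (i-1) - w i)
    simp [Pi.add_apply]
    abel)

lemma dE_eq : dE p A = sE p A - 1 := by
  refine AddMonoidHom.ext fun v => funext fun i => ?_
  show v (i - 1) - v i = (sE p A v - v) i
  simp [sE, Pi.sub_apply]
  rfl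

def toV (g : ZMod p → A) : V p A := fun i => Additive.ofMul (g i)

lemma toV_Dm (g : ZMod p → A) : toV p A (Dm p A g) = dE p A (toV p A g) := by
  funext i
  show Additive.ofMul ((g i)⁻¹ * g (i - 1)) = Additive.ofMul (g (i-1)) - Additive.ofMul (g i)
  rw [ofMul_mul, ofMul_inv, sub_eq_add_neg, add_comm]
  exact (sub_eq_add_neg _ _).symm

lemma toV_iter (n : ℕ) (g : ZMod p → A) :
    toV p A ((⇑(Dm p A))^[n] g) = (⇑(dE p A))^[n] (toV p A g) := by
  induction n with
  | zero => rfl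
  | succ n ih => rw [Function.iterate_succ_apply', Function.iterate_succ_apply', toV_Dm, ih]

lemma sE_pow_apply (n : ℕ) (v : V p A) (i : ZMod p) :
    ((sE p A ^ n) v) i = v (i - n) := by
  induction n generalizing v i with
  | zero => simp
  | succ n ih =>
      rw [pow_succ]
      show ((sE p A ^ n) (sE p A v)) i = _
      rw [ih]
      show v (i - n - 1) = v (i - (n+1 : ℕ))
      push_cast
      ring_nf

lemma sE_pow_p : sE p A ^ p = 1 := by
  refine AddMonoidHom.ext fun v => funext fun i => ?_
  refine (sE_pow_apply p A p v i).trans ?_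
  show v (i - p) = v i
  simp [ZMod.natCast_self]

end Aux4

section Aux5
variable (p : ℕ) [Fact p.Prime] (A : Type*) [CommGroup A]

abbrev R := AddMonoid.End (V p A)

lemma smul_p_End (hA : ∀ a : A, a ^ p = 1) (f : R p A) : p • f = 0 := by
  refine AddMonoidHom.ext fun v => funext fun i => ?_
  show p • (f v i) = (0 : Additive A)
  have : ((p • (f v i)) : Additive A).toMul = ((0 : Additive A)).toMul := by
    rw [toMul_nsmul, hA]
    rfl
  exact Additive.toMul.injective this

lemma term_apply (m k C : ℕ) (v : V p A) (j : ZMod p) :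
    ((sE p A ^ m * (-1 : R p A) ^ k * (C : R p A)) v) j
      = ((-1 : ℤ) ^ k) • (C • v (j - m)) := by
  rcases Nat.even_or_odd k with hk | hk
  · have h1 : (-1 : R p A) ^ k = 1 := Even.neg_one_pow (α := R p A) hk
    have h2 : (-1 : ℤ) ^ k = 1 := hk.neg_one_pow
    rw [h1, h2, one_smul]
    show ((sE p A ^ m) ((1 : R p A) ((C : R p A) v))) j = C • v (j - ↑m)
    rw [AddMonoid.End.one_apply, sE_pow_apply]
    rfl
  · have h1 : (-1 : R p A) ^ k = -1 := Odd.neg_one_pow (α := R p A) hk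
    have h2 : (-1 : ℤ) ^ k = -1 := hk.neg_one_pow
    rw [h1, h2, neg_smul, one_smul]
    show ((sE p A ^ m) ((-1 : R p A) ((C : R p A) v))) j = -(C • v (j - ↑m))
    rw [sE_pow_apply]
    have hneg : ((-1 : R p A) ((C : R p A) v)) = -((C : R p A) v) := rfl
    rw [hneg]
    simp [Pi.neg_apply, smul_neg]

lemma dE_pow_p (hp : Odd p) (hA : ∀ a : A, a ^ p = 1) : dE p A ^ p = 0 := by
  have hcomm : Commute (sE p A) (-1 : R p A) := Commute.neg_one_right (sE p A)
  have hbin := hcomm.add_pow p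
  rw [dE_eq, sub_eq_add_neg, hbin, Finset.sum_range_succ]
  have hp1 : 1 ≤ p := (Fact.out : p.Prime).one_lt.le
  have hsum0 : ∑ m ∈ Finset.range p,
      sE p A ^ m * (-1 : R p A) ^ (p - m) * (p.choose m : R p A)
      = sE p A ^ 0 * (-1 : R p A) ^ (p - 0) * (p.choose 0 : R p A) := by
    refine Finset.sum_eq_single_of_mem 0 (Finset.mem_range.2 (by omega)) ?_
    intro m hm hm0
    rw [Finset.mem_range] at hm
    obtain ⟨c, hc⟩ := (Nat.Prime.dvd_choose_self Fact.out hm0 hm)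
    rw [hc]
    push_cast
    rw [← mul_assoc, mul_assoc _ (p : R p A) _]
    have : (p : R p A) * (c : R p A) = p • ((c : ℕ) : R p A) := by rw [nsmul_eq_mul]
    rw [this, smul_p_End p A hA, mul_zero]
  rw [hsum0]
  simp only [pow_zero, one_mul, Nat.choose_zero_right, Nat.cast_one, mul_one, Nat.choose_self,
    Nat.sub_self, Nat.sub_zero]
  have h2 : (-1 : R p A) ^ p = -1 := Odd.neg_one_pow (α := R p A) hp
  rw [sE_pow_p, h2]
  exact neg_add_cancel 1

lemma dE_pow_pred_e0 (hp : Odd p) (b : Additive A) :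
    ((dE p A ^ (p - 1)) (fun j => if j = 0 then b else 0)) 0 = b := by
  have hcomm : Commute (sE p A) (-1 : R p A) := Commute.neg_one_right (sE p A)
  have hbin := hcomm.add_pow (p - 1)
  rw [dE_eq, sub_eq_add_neg, hbin, show ∀ (s : Finset ℕ) (f : ℕ → R p A) (v : V p A),
      (∑ m ∈ s, f m) v = ∑ m ∈ s, f m v from fun s f v => AddMonoidHom.finset_sum_apply _ _ _,
    Finset.sum_apply]
  have hp1 : 1 ≤ p := (Fact.out : p.Prime).one_lt.le
  have key : ∀ m ∈ Finset.range (p - 1 + 1), m ≠ 0 →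
      ((sE p A ^ m * (-1 : R p A) ^ (p - 1 - m)
        * (((p-1).choose m : ℕ) : R p A)) (fun j => if j = 0 then b else 0)) 0 = 0 := by
    intro m hm hm0
    rw [Finset.mem_range, Nat.sub_add_cancel hp1] at hm
    rw [term_apply]
    have hmz : ((m : ZMod p)) ≠ 0 := by
      rw [Ne, ZMod.natCast_eq_zero_iff]
      exact fun hd => hm0 (Nat.eq_zero_of_dvd_of_lt hd hm)
    have hcond : ((0 : ZMod p) - m) ≠ 0 := by simpa using hmz
    rw [if_neg hcond]
    simp
  rw [Finset.sum_eq_single_of_mem 0 (by simp) key, term_apply]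
  have heven : Even (p - 1) := by
    rcases hp with ⟨k, hk⟩
    exact ⟨k, by omega⟩
  have h3 : (-1 : ℤ) ^ (p - 1 - 0) = 1 := by rw [Nat.sub_zero]; exact heven.neg_one_pow
  rw [h3, one_smul]
  norm_num

end Aux5

section Aux6
variable (p : ℕ) [NeZero p] (A : Type*) [CommGroup A]

lemma Dm_iter_mul (n : ℕ) (x y : ZMod p → A) :
    (⇑(Dm p A))^[n] (x * y) = (⇑(Dm p A))^[n] x * (⇑(Dm p A))^[n] y := by
  induction n with
  | zero => rfl
  | succ n ih => rw [Function.iterate_succ_apply', Function.iterate_succ_apply',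
      Function.iterate_succ_apply', ih, map_mul]

lemma Dm_iter_inv (n : ℕ) (x : ZMod p → A) :
    (⇑(Dm p A))^[n] x⁻¹ = ((⇑(Dm p A))^[n] x)⁻¹ := by
  induction n with
  | zero => rfl
  | succ n ih => rw [Function.iterate_succ_apply', Function.iterate_succ_apply', ih, map_inv]

lemma lamG_eq (a : A) (i : ℕ) :
    lamG p A a i = (⇑(Dm p A))^[i - 1] (fun t => if t = 0 then a else 1) := by
  rw [lamG, Delta_eq]

lemma prod_mem_range (u : ZMod p → A) (hu : ∏ j : ZMod p, u j = 1) :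
    ∃ g, Dm p A g = u := by
  have hp1 : 1 ≤ p := Nat.one_le_iff_ne_zero.2 (NeZero.ne p)
  have hrange : ∏ k ∈ Finset.range p, u (k : ZMod p) = 1 := by
    rw [← hu]
    refine Finset.prod_nbij' (fun k => ((k : ZMod p))) (fun z => z.val) ?_ ?_ ?_ ?_ ?_
    · intro a _; exact Finset.mem_univ _
    · intro z _; exact Finset.mem_range.2 (ZMod.val_lt z)
    · intro a ha; exact ZMod.val_cast_of_lt (Finset.mem_range.1 ha)
    · intro z _; exact ZMod.natCast_rightInverse z
    · intro a _; rfl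
  refine ⟨fun j => (∏ k ∈ Finset.range (j.val + 1), u (k : ZMod p))⁻¹, funext fun j => ?_⟩
  rw [Dm_apply, inv_inv]
  by_cases hj : j = 0
  · subst hj
    have hv : ((0 : ZMod p) - 1) = ((p - 1 : ℕ) : ZMod p) := by
      rw [Nat.cast_sub hp1, ZMod.natCast_self, Nat.cast_one]
    have hval : ((0 : ZMod p) - 1).val = p - 1 := by
      rw [hv, ZMod.val_cast_of_lt (by omega)]
    rw [hval, Nat.sub_add_cancel hp1, hrange]
    simp [ZMod.val_zero]
  · have hval0 : j.val ≠ 0 := fun h => hj ((ZMod.val_eq_zero j).1 h)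
    obtain ⟨m, hm⟩ : ∃ m, j.val = m + 1 := ⟨j.val - 1, by omega⟩
    have hj2 : j = ((m + 1 : ℕ) : ZMod p) := by
      conv_lhs => rw [← ZMod.natCast_rightInverse j]
      rw [hm]
    have hmp : m + 1 < p := hm ▸ ZMod.val_lt j
    have hsub : j - 1 = ((m : ℕ) : ZMod p) := by rw [hj2]; push_cast; ring
    have hsval : (j - 1).val = m := by rw [hsub, ZMod.val_cast_of_lt (by omega)]
    rw [hm, hsval, Finset.prod_range_succ]
    rw [mul_comm (∏ x ∈ Finset.range (m+1), u ↑x) (u ↑(m+1)), mul_assoc, mul_inv_cancel, mul_one,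
      ← hj2]

end Aux6

/-- For an elementary abelian finite p-group A and 1 ≤ i ≤ p, the map
    A → γ_i*(W(A))/γ_{i+1}*(W(A)), a ↦ λ_i(a)·γ_{i+1}*(W(A)), is a group isomorphism:
    it lands in γ_i*(W(A)), is a homomorphism modulo γ_{i+1}*(W(A)), is injective and
    surjective onto γ_i*(W(A))/γ_{i+1}*(W(A)).
    (γ_i*(W(A)) = `gammaStar p A (i-1)`, λ_i(a) = `lamG p A a i`.) -/
theorem statement8 (p : ℕ) [Fact p.Prime] (hp : Odd p)
    (A : Type*) [CommGroup A] [Fintype A] (hA : ∀ a : A, a ^ p = 1)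
    (i : ℕ) (hi1 : 1 ≤ i) (hip : i ≤ p) :
    (∀ a : A, inlW p A (lamG p A a i) ∈ gammaStar p A (i - 1))
    ∧ (∀ a b : A,
        inlW p A (lamG p A (a * b) i * (lamG p A a i * lamG p A b i)⁻¹) ∈ gammaStar p A i)
    ∧ (∀ a : A, inlW p A (lamG p A a i) ∈ gammaStar p A i → a = 1)
    ∧ (∀ x : W p A, x ∈ gammaStar p A (i - 1) →
        ∃ a : A, x * (inlW p A (lamG p A a i))⁻¹ ∈ gammaStar p A i) := by
  have hprime : p.Prime := Fact.out
  haveI : NeZero p := ⟨hprime.ne_zero⟩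
  -- injectivity core
  have hinj : ∀ a : A, lamG p A a i ∈ Km p A i → a = 1 := by
    intro a ha
    rw [mem_Km] at ha
    obtain ⟨w, hw⟩ := ha
    rw [lamG_eq] at hw
    have h1 := congrArg (toV p A) hw
    rw [toV_iter, toV_iter] at h1
    have h2 := congrArg ((⇑(dE p A))^[p - i]) h1
    rw [← Function.iterate_add_apply, ← Function.iterate_add_apply] at h2
    rw [Nat.sub_add_cancel hip] at h2
    have hzero : (⇑(dE p A))^[p] (toV p A w) = 0 := by
      have : (⇑(dE p A))^[p] (toV p A w) = ((dE p A) ^ p) (toV p A w) := rfl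
      rw [this, dE_pow_p p A hp hA]
      rfl
    have hpi : p - i + (i - 1) = p - 1 := by omega
    rw [hpi, hzero] at h2
    have he0 : toV p A (fun t => if t = 0 then a else 1)
        = (fun j => if j = 0 then Additive.ofMul a else 0) := by
      funext j
      show Additive.ofMul (if j = 0 then a else 1) = _
      split_ifs <;> rfl
    rw [he0] at h2
    have h4 : (⇑(dE p A))^[p-1] (fun j => if j = 0 then Additive.ofMul a else 0) = 0 := h2.symm
    have h5 := dE_pow_pred_e0 p A hp (Additive.ofMul a)
    rw [show (dE p A ^ (p-1)) (fun j => if j = 0 then Additive.ofMul a else 0)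
        = (⇑(dE p A))^[p-1] (fun j => if j = 0 then Additive.ofMul a else 0) from rfl, h4] at h5
    exact Additive.ofMul.injective h5.symm
  refine ⟨?_, ?_, ?_, ?_⟩
  · intro a
    rw [gammaStar_eq, lamG_eq]
    exact Subgroup.mem_map_of_mem _ ((mem_Km p A _ _).2 ⟨_, rfl⟩)
  · intro a b
    have hmul : lamG p A (a * b) i = lamG p A a i * lamG p A b i := by
      rw [lamG_eq, lamG_eq, lamG_eq, ← Dm_iter_mul]
      congr 1
      funext t
      by_cases ht : t = 0 <;> simp [ht]
    rw [hmul, mul_inv_cancel, map_one]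
    exact one_mem _
  · intro a ha
    rw [gammaStar_eq] at ha
    obtain ⟨g, hg, heq⟩ := ha
    have : g = lamG p A a i := SemidirectProduct.inl_injective heq
    subst this
    exact hinj a hg
  · intro x hx
    rw [gammaStar_eq] at hx
    obtain ⟨g, hg, rfl⟩ := hx
    rw [SetLike.mem_coe, mem_Km] at hg
    obtain ⟨w, rfl⟩ := hg
    refine ⟨∏ j : ZMod p, w j, ?_⟩
    set a := ∏ j : ZMod p, w j with ha
    have he : ∏ j : ZMod p, (fun t : ZMod p => if t = 0 then a else 1) j = a := by
      rw [Finset.prod_ite_eq' Finset.univ (0 : ZMod p) (fun _ => a)]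
      simp
    have hprod : ∏ j : ZMod p, (w j * ((fun t : ZMod p => if t = 0 then a else 1) j)⁻¹) = 1 := by
      rw [Finset.prod_mul_distrib, Finset.prod_inv_distrib, he, ← ha, mul_inv_cancel]
    obtain ⟨g0, hg0⟩ :=
      prod_mem_range p A (w * (fun t : ZMod p => if t = 0 then a else 1)⁻¹) hprod
    rw [gammaStar_eq]
    have hxel : inlW p A ((⇑(Dm p A))^[i-1] w) * (inlW p A (lamG p A a i))⁻¹
        = inlW p A ((⇑(Dm p A))^[i] g0) := by
      rw [← map_inv, ← map_mul, lamG_eq, ← Dm_iter_inv, ← Dm_iter_mul, ← hg0]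
      have : (⇑(Dm p A))^[i-1] (Dm p A g0) = (⇑(Dm p A))^[i] g0 := by
        rw [← Function.iterate_succ_apply]
        congr 1
        omega
      rw [this]
    rw [hxel]
    exact Subgroup.mem_map_of_mem _ ((mem_Km p A _ _).2 ⟨_, rfl⟩)
end

section
/- Let A be an elementary abelian finite p-group and let 1 ≤ i ≤ p. Then every element of γ_i*(W(A)) can be written in the form λ_i(a_i)·λ_{i+1}(a_{i+1})·⋯·λ_p(a_p) with a_i, a_{i+1}, …, a_p ∈ A, and this representation is unique. -/
open Pointwise

open GGS


def fc (k m : ℕ) : ℤ := if m ≤ k then (-1 : ℤ)^(k - m) * (k.choose m) else 0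

lemma fc_self (k : ℕ) : fc k k = 1 := by simp [fc]

lemma fc_of_gt {k m : ℕ} (h : k < m) : fc k m = 0 := by simp [fc, h, Nat.not_le.2 h]

lemma fc_zero_right (k : ℕ) : fc k 0 = (-1 : ℤ)^k := by simp [fc]

lemma fc_step {p k m : ℕ} (hk : k + 1 < p) (hm : m < p) :
    - fc k m + fc k (if m = 0 then p - 1 else m - 1) = fc (k + 1) m := by
  rcases Nat.eq_zero_or_pos m with rfl | hm0
  · have h1 : k < p - 1 := by omega
    simp only [reduceIte, fc_zero_right, fc_of_gt h1]
    rw [pow_succ]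
    ring
  · obtain ⟨m', rfl⟩ : ∃ m', m = m' + 1 := ⟨m - 1, by omega⟩
    rw [if_neg (by omega)]
    simp only [Nat.add_sub_cancel]
    rcases lt_trichotomy (m' + 1) (k + 1) with h | h | h
    · -- m' + 1 ≤ k
      have h1 : m' + 1 ≤ k := by omega
      have h2 : m' ≤ k := by omega
      have h3 : m' + 1 ≤ k + 1 := by omega
      simp only [fc, if_pos h1, if_pos h2, if_pos h3]
      have e1 : k - m' = (k - (m' + 1)) + 1 := by omega
      have e2 : k + 1 - (m' + 1) = k - m' := by omega
      rw [e1, e2, e1, Nat.choose_succ_succ k m']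
      push_cast
      ring
    · -- m = k + 1
      have : m' = k := by omega
      subst this
      rw [fc_of_gt (by omega), fc_self, fc_self]
      ring
    · rw [fc_of_gt (by omega), fc_of_gt (by omega), fc_of_gt (by omega)]
      ring

lemma val_sub_one {p : ℕ} [Fact p.Prime] (t : ZMod p) :
    (t - 1).val = if t.val = 0 then p - 1 else t.val - 1 := by
  have hp1 : 1 ≤ p := (Fact.out : p.Prime).one_lt.le
  by_cases h : t = 0
  · rw [if_pos (by simp [h])]
    subst h
    obtain ⟨q, rfl⟩ : ∃ q, p = q + 1 := ⟨p - 1, by omega⟩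
    simp [ZMod.val_neg_one]
  · rw [if_neg (fun hc => h ((ZMod.val_eq_zero t).1 hc))]
    have hv : t.val ≠ 0 := fun hc => h ((ZMod.val_eq_zero t).1 hc)
    have hlt : t.val < p := ZMod.val_lt t
    have key : t - 1 = ((t.val - 1 : ℕ) : ZMod p) := by
      have ht : ((t.val : ℕ) : ZMod p) = t := by simp [ZMod.natCast_val, ZMod.cast_id]
      rw [Nat.cast_sub (by omega), Nat.cast_one, ht]
    rw [key, ZMod.val_cast_of_lt (by omega)]

namespace StatementNine
open Finset Function
open scoped commutatorElement

variable (p : ℕ) [Fact p.Prime] {A : Type*} [CommGroup A]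

def e0 (a : A) : ZMod p → A := fun t => if t = 0 then a else 1

lemma delta_apply (g : ZMod p → A) (t : ZMod p) :
    Delta p A g t = (g t)⁻¹ * g (t - 1) := by
  simp only [Delta, inlW, sigma, map_inv, SemidirectProduct.mul_left,
    SemidirectProduct.mul_right, SemidirectProduct.inv_left, SemidirectProduct.inv_right,
    SemidirectProduct.left_inl, SemidirectProduct.right_inl, SemidirectProduct.left_inr,
    SemidirectProduct.right_inr]
  simp [shiftAut, MulAut.inv_def, MulEquiv.symm_mk, sub_eq_add_neg]

lemma delta_mul (g h : ZMod p → A) :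
    Delta p A (g * h) = Delta p A g * Delta p A h := by
  funext t
  simp only [delta_apply, Pi.mul_apply, mul_inv]
  exact mul_mul_mul_comm _ _ _ _

lemma iter_mul (n : ℕ) (g h : ZMod p → A) :
    (Delta p A)^[n] (g * h) = (Delta p A)^[n] g * (Delta p A)^[n] h := by
  induction n with
  | zero => rfl
  | succ n ih => simp [Function.iterate_succ_apply', ih, delta_mul]

def DnHom (n : ℕ) : (ZMod p → A) →* (ZMod p → A) :=
  MonoidHom.mk' ((Delta p A)^[n]) (iter_mul p n)

lemma iter_prod {ι : Type*} (n : ℕ) (s : Finset ι) (f : ι → ZMod p → A) :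
    (Delta p A)^[n] (∏ t ∈ s, f t) = ∏ t ∈ s, (Delta p A)^[n] (f t) :=
  map_prod (DnHom p n) f s

lemma iter_one (n : ℕ) : (Delta p A)^[n] (1 : ZMod p → A) = 1 :=
  map_one (DnHom p n)

lemma iter_inv (n : ℕ) (g : ZMod p → A) :
    (Delta p A)^[n] g⁻¹ = ((Delta p A)^[n] g)⁻¹ :=
  map_inv (DnHom p n) g

lemma e0_mul (a b : A) : e0 p (a * b) = e0 p a * e0 p b := by
  funext t; by_cases h : t = 0 <;> simp [e0, h]

lemma e0_inv (a : A) : e0 p a⁻¹ = (e0 p a)⁻¹ := by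
  funext t; by_cases h : t = 0 <;> simp [e0, h]

lemma e0_one : e0 p (1 : A) = 1 := by
  funext t; by_cases h : t = 0 <;> simp [e0, h]


lemma val_formula : ∀ k, k < p → ∀ (a : A) (t : ZMod p),
    (Delta p A)^[k] (e0 p a) t = a ^ fc k t.val := by
  intro k
  induction k with
  | zero =>
    intro _ a t
    simp only [Function.iterate_zero, id_eq]
    by_cases h : t = 0
    · subst h; rw [ZMod.val_zero]; simp [e0, fc]
    · have hv : 0 < t.val := Nat.pos_of_ne_zero (fun hc => h ((ZMod.val_eq_zero t).1 hc))
      rw [fc_of_gt hv]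
      simp [e0, h]
  | succ k ih =>
    intro hk a t
    rw [Function.iterate_succ_apply', delta_apply, ih (by omega), ih (by omega),
      ← zpow_neg, ← zpow_add, val_sub_one, fc_step hk (ZMod.val_lt t)]

lemma apow_dvd (hA : ∀ a : A, a ^ p = 1) (a : A) (z : ℤ) (hz : (p : ℤ) ∣ z) :
    a ^ z = 1 := by
  obtain ⟨w, rfl⟩ := hz
  rw [zpow_mul, zpow_natCast, hA, one_zpow]

lemma iter_p (hodd : Odd p) (hA : ∀ a : A, a ^ p = 1) (a : A) :
    (Delta p A)^[p] (e0 p a) = 1 := by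
  have hp' : p.Prime := Fact.out
  have hp1 : 1 < p := hp'.one_lt
  funext t
  have hstep := Function.iterate_add_apply (Delta p A) 1 (p-1) (e0 p a)
  rw [show 1 + (p-1) = p by omega, Function.iterate_one] at hstep
  rw [hstep, delta_apply, val_formula p (p-1) (by omega), val_formula p (p-1) (by omega),
    ← zpow_neg, ← zpow_add, val_sub_one, Pi.one_apply]
  by_cases h : t = 0
  · rw [h, ZMod.val_zero, if_pos rfl]
    have heven : Even (p - 1) := Nat.Odd.sub_odd hodd odd_one
    rw [fc_zero_right, heven.neg_one_pow, fc_self]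
    norm_num
  · have hv : t.val ≠ 0 := fun hc => h ((ZMod.val_eq_zero t).1 hc)
    rw [if_neg hv]
    set m := t.val with hmdef
    have hm1 : 1 ≤ m := Nat.pos_of_ne_zero (fun hc => h ((ZMod.val_eq_zero t).1 hc))
    have hm2 : m ≤ p - 1 := by have := ZMod.val_lt t; omega
    apply apow_dvd p hA
    have pascal : (p-1).choose (m-1) + (p-1).choose m = p.choose m := by
      obtain ⟨q, hq⟩ : ∃ q, m = q + 1 := ⟨m-1, by omega⟩
      obtain ⟨r, hr⟩ : ∃ r, p = r + 1 := ⟨p-1, by omega⟩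
      rw [hq, hr]
      simp [Nat.choose_succ_succ]
    have hz : -fc (p-1) m + fc (p-1) (m-1) = (-1 : ℤ)^(p-m) * (p.choose m) := by
      simp only [fc, if_pos hm2, if_pos (by omega : m - 1 ≤ p - 1)]
      rw [show p - 1 - (m - 1) = (p - 1 - m) + 1 by omega,
        show p - m = (p - 1 - m) + 1 by omega, pow_succ, ← pascal]
      push_cast
      ring
    rw [hz]
    exact Dvd.dvd.mul_left
      (Int.natCast_dvd_natCast.2 (hp'.dvd_choose_self (by omega) (by omega))) _

lemma iter_ge_p (hodd : Odd p) (hA : ∀ a : A, a ^ p = 1) (a : A) {m : ℕ} (hm : p ≤ m) :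
    (Delta p A)^[m] (e0 p a) = 1 := by
  have h := Function.iterate_add_apply (Delta p A) (m - p) p (e0 p a)
  rw [show m - p + p = m by omega] at h
  rw [h, iter_p p hodd hA, iter_one]

lemma uniq (b : ℕ → A)
    (h : ∏ t ∈ Finset.range p, (Delta p A)^[t] (e0 p (b t)) = 1) :
    ∀ m, m < p → b m = 1 := by
  suffices hd : ∀ d m, m < p → p - m ≤ d → b m = 1 by
    intro m hm; exact hd p m hm (by omega)
  intro d
  induction d with
  | zero => intro m hm hle; omega
  | succ d ih =>
    intro m hm hle
    have hval : ((m : ZMod p)).val = m := ZMod.val_cast_of_lt hm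
    have happ := congrFun h ((m : ℕ) : ZMod p)
    rw [Finset.prod_apply, Pi.one_apply] at happ
    rw [Finset.prod_eq_single m
      (fun t ht htm => by
        rw [val_formula p t (Finset.mem_range.1 ht), hval]
        rcases lt_or_gt_of_ne htm with hlt | hgt
        · rw [fc_of_gt hlt, zpow_zero]
        · rw [ih t (Finset.mem_range.1 ht) (by omega), one_zpow])
      (fun hc => absurd (Finset.mem_range.2 hm) hc)] at happ
    rw [val_formula p m hm, hval, fc_self, zpow_one] at happ
    exact happ

lemma phi_bijective (hodd : Odd p) (hA : ∀ a : A, a ^ p = 1) [Fintype A] :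
    Function.Bijective (fun a : Fin p → A =>
      ∏ t : Fin p, (Delta p A)^[(t : ℕ)] (e0 p (a t))) := by
  have hp1 : 0 < p := (Fact.out : p.Prime).pos
  rw [Fintype.bijective_iff_injective_and_card]
  constructor
  · intro a a' hphi
    have key : ∀ m, m < p →
        (fun t : ℕ => if ht : t < p then a ⟨t, ht⟩ * (a' ⟨t, ht⟩)⁻¹ else 1) m = 1 := by
      apply uniq p
      have hprod : ∀ (c : Fin p → A),
          ∏ t ∈ Finset.range p, (Delta p A)^[t]
            (e0 p ((fun t : ℕ => if ht : t < p then c ⟨t, ht⟩ else 1) t))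
          = ∏ t : Fin p, (Delta p A)^[(t : ℕ)] (e0 p (c t)) := by
        intro c
        rw [← Fin.prod_univ_eq_prod_range]
        exact Finset.prod_congr rfl (fun t _ => by simp only [Fin.is_lt, dif_pos])
      calc ∏ t ∈ Finset.range p, (Delta p A)^[t]
            (e0 p ((fun t : ℕ => if ht : t < p then a ⟨t, ht⟩ * (a' ⟨t, ht⟩)⁻¹ else 1) t))
          = (∏ t ∈ Finset.range p, (Delta p A)^[t]
              (e0 p ((fun t : ℕ => if ht : t < p then a ⟨t, ht⟩ else 1) t)))
            * (∏ t ∈ Finset.range p, (Delta p A)^[t]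
              (e0 p ((fun t : ℕ => if ht : t < p then a' ⟨t, ht⟩ else 1) t)))⁻¹ := by
            rw [← Finset.prod_inv_distrib, ← Finset.prod_mul_distrib]
            refine Finset.prod_congr rfl (fun t ht => ?_)
            have htp := Finset.mem_range.1 ht
            simp only [dif_pos htp]
            rw [e0_mul, e0_inv, iter_mul, iter_inv]
        _ = 1 := by
            rw [hprod, hprod]
            simp only at hphi
            rw [hphi, mul_inv_cancel]
    funext t
    have h1 := key t.val t.isLt
    simp only [dif_pos t.isLt] at h1
    rw [mul_inv_eq_one] at h1
    simpa using h1
  · simp [ZMod.card]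

lemma conj_inl (b : ZMod p → A) (w : W p A) :
    w * inlW p A b * w⁻¹ = inlW p A (fun i => b (i + Multiplicative.toAdd w.right)) := by
  refine SemidirectProduct.ext ?_ ?_
  · simp only [inlW, SemidirectProduct.mul_left, SemidirectProduct.mul_right,
      SemidirectProduct.inv_left, SemidirectProduct.inv_right,
      SemidirectProduct.left_inl, SemidirectProduct.right_inl, map_inv, map_mul]
    funext i
    simp [shiftAut, MulAut.inv_def, MulEquiv.symm_mk, mul_comm, mul_left_comm]
  · simp [inlW]
lemma comm_inl (b : ZMod p → A) (w : W p A) :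
    ⁅inlW p A b, w⁆
      = inlW p A (b * (fun i => (b (i + Multiplicative.toAdd w.right))⁻¹)) := by
  rw [commutatorElement_def,
    show (inlW p A b)⁻¹ = inlW p A b⁻¹ from (map_inv _ _).symm,
    mul_assoc (inlW p A b) w, mul_assoc (inlW p A b), conj_inl, ← map_mul]
  rfl

lemma delta_tau (s : ZMod p) (g : ZMod p → A) :
    Delta p A (fun i => g (i + s)) = fun i => Delta p A g (i + s) := by
  funext i
  rw [delta_apply, delta_apply]
  exact congrArg (fun x => (g (i + s))⁻¹ * g x) (by ring)

lemma iter_tau (n : ℕ) (s : ZMod p) (g : ZMod p → A) :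
    (Delta p A)^[n] (fun i => g (i + s)) = fun i => (Delta p A)^[n] g (i + s) := by
  induction n with
  | zero => rfl
  | succ n ih => rw [Function.iterate_succ_apply', Function.iterate_succ_apply', ih, delta_tau]

lemma telescope (b : ZMod p → A) (m : ℕ) :
    Delta p A (fun i => ∏ j ∈ Finset.range m, b (i + (j : ZMod p) + 1))
      = fun i => b i * (b (i + (m : ZMod p)))⁻¹ := by
  funext i
  rw [delta_apply]
  have key : ∏ j ∈ Finset.range (m+1), b (i + (j : ZMod p))
      = (∏ j ∈ Finset.range m, b (i + (j : ZMod p) + 1)) * b i := by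
    rw [Finset.prod_range_succ']
    congr 1
    · exact Finset.prod_congr rfl fun j _ => congrArg b (by push_cast; ring)
    · exact congrArg b (by push_cast; ring)
  have key2 : ∏ j ∈ Finset.range (m+1), b (i + (j : ZMod p))
      = (∏ j ∈ Finset.range m, b (i + (j : ZMod p))) * b (i + (m : ZMod p)) :=
    Finset.prod_range_succ _ m
  have h1 : ∏ j ∈ Finset.range m, b (i - 1 + (j : ZMod p) + 1)
      = ∏ j ∈ Finset.range m, b (i + (j : ZMod p)) :=
    Finset.prod_congr rfl fun j _ => congrArg b (by ring)
  rw [h1]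
  have h2 : (∏ j ∈ Finset.range m, b (i + (j : ZMod p) + 1)) * b i
      = (∏ j ∈ Finset.range m, b (i + (j : ZMod p))) * b (i + (m : ZMod p)) := by
    rw [← key, key2]
  calc (∏ j ∈ Finset.range m, b (i + (j : ZMod p) + 1))⁻¹
        * ∏ j ∈ Finset.range m, b (i + (j : ZMod p))
      = (∏ j ∈ Finset.range m, b (i + (j : ZMod p) + 1))⁻¹
        * ((∏ j ∈ Finset.range m, b (i + (j : ZMod p))) * b (i + (m : ZMod p)))
        * (b (i + (m : ZMod p)))⁻¹ := by group
    _ = (∏ j ∈ Finset.range m, b (i + (j : ZMod p) + 1))⁻¹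
        * ((∏ j ∈ Finset.range m, b (i + (j : ZMod p) + 1)) * b i)
        * (b (i + (m : ZMod p)))⁻¹ := by rw [h2]
    _ = b i * (b (i + (m : ZMod p)))⁻¹ := by group

def Dsub (n : ℕ) : Subgroup (W p A) := ((inlW p A).comp (DnHom p n)).range

lemma mem_Dsub {n : ℕ} {x : W p A} :
    x ∈ Dsub p n ↔ ∃ g, x = inlW p A ((Delta p A)^[n] g) := by
  constructor
  · rintro ⟨g, rfl⟩; exact ⟨g, rfl⟩
  · rintro ⟨g, rfl⟩; exact ⟨g, rfl⟩

lemma gamma_eq (n : ℕ) : gammaStar p A n = Dsub p n := by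
  induction n with
  | zero =>
    show baseW p A = Dsub p 0
    ext x
    rw [mem_Dsub]
    constructor
    · rintro ⟨g, rfl⟩; exact ⟨g, rfl⟩
    · rintro ⟨g, rfl⟩; exact ⟨g, rfl⟩
  | succ n ih =>
    show ⁅gammaStar p A n, ⊤⁆ = Dsub p (n + 1)
    rw [ih]
    apply le_antisymm
    · rw [Subgroup.commutator_le]
      intro x hx w _
      obtain ⟨g, rfl⟩ := (mem_Dsub p).1 hx
      set b := (Delta p A)^[n] g with hb
      set k := Multiplicative.toAdd w.right with hk
      set m := k.val with hmdef
      have hm : ((m : ℕ) : ZMod p) = k := by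
        simp [hmdef, ZMod.natCast_val, ZMod.cast_id]
      rw [comm_inl]
      refine (mem_Dsub p).2 ⟨fun i => ∏ j ∈ Finset.range m, g (i + (j : ZMod p) + 1), ?_⟩
      congr 1
      have hiter : (Delta p A)^[n] (fun i => ∏ j ∈ Finset.range m, g (i + (j : ZMod p) + 1))
          = fun i => ∏ j ∈ Finset.range m, b (i + (j : ZMod p) + 1) := by
        have h1 : (fun i => ∏ j ∈ Finset.range m, g (i + (j : ZMod p) + 1))
            = ∏ j ∈ Finset.range m, (fun i => g (i + ((j : ZMod p) + 1))) := by
          funext i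
          rw [Finset.prod_apply]
          exact Finset.prod_congr rfl fun j _ => congrArg g (by ring)
        rw [h1, iter_prod]
        funext i
        rw [Finset.prod_apply]
        refine Finset.prod_congr rfl fun j _ => ?_
        rw [iter_tau]
        exact congrArg ((Delta p A)^[n] g) (by ring)
      rw [Function.iterate_succ_apply', hiter, telescope, hm]
      rfl
    · rintro x hx
      obtain ⟨g, rfl⟩ := (mem_Dsub p).1 hx
      have hs : Multiplicative.toAdd ((sigma p A)⁻¹).right = (-1 : ZMod p) := by
        simp [sigma]
      have heq : inlW p A ((Delta p A)^[n+1] g)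
          = ⁅inlW p A ((Delta p A)^[n] g⁻¹), (sigma p A)⁻¹⁆ := by
        rw [comm_inl, iter_inv]
        congr 1
        funext i
        rw [Function.iterate_succ_apply', delta_apply, Pi.mul_apply, Pi.inv_apply,
          Pi.inv_apply, hs, inv_inv]
        exact congrArg (fun x => ((Delta p A)^[n] g i)⁻¹ * (Delta p A)^[n] g x)
          (by ring)
      rw [heq]
      exact Subgroup.commutator_mem_commutator ((mem_Dsub p).2 ⟨g⁻¹, rfl⟩) (Subgroup.mem_top _)

lemma lam_eq (a : A) (j : ℕ) : lamG p A a j = (Delta p A)^[j-1] (e0 p a) := rfl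

lemma reindex (i : ℕ) (hi1 : 1 ≤ i) (hip : i ≤ p) (c : ℕ → A) :
    ∏ j ∈ Finset.Icc i p, (Delta p A)^[j-1] (e0 p (c j))
      = ∏ t ∈ Finset.range p,
          (Delta p A)^[t] (e0 p (if i ≤ t + 1 then c (t+1) else 1)) := by
  rw [← Finset.Ico_add_one_right_eq_Icc, Finset.prod_Ico_eq_prod_range]
  rw [← Finset.prod_subset
    (show Finset.Ico (i-1) p ⊆ Finset.range p from
      fun t ht => Finset.mem_range.2 (Finset.mem_Ico.1 ht).2)
    (fun t ht hts => by
      have h1 : t < p := Finset.mem_range.1 ht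
      have h2 : t < i - 1 := by
        by_contra hc
        exact hts (Finset.mem_Ico.2 ⟨by omega, h1⟩)
      rw [if_neg (by omega), e0_one, iter_one])]
  rw [Finset.prod_Ico_eq_prod_range, show p - (i-1) = p + 1 - i by omega]
  refine Finset.prod_congr rfl fun t ht => ?_
  rw [if_pos (by omega), show i - 1 + t + 1 = i + t by omega, show i + t - 1 = i - 1 + t by omega]

lemma exist_form (hodd : Odd p) (hA : ∀ a : A, a ^ p = 1) [Fintype A]
    (i : ℕ) (hi1 : 1 ≤ i) (hip : i ≤ p) (g : ZMod p → A) :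
    ∃ c : ℕ → A, (Delta p A)^[i-1] g
      = ∏ j ∈ Finset.Icc i p, (Delta p A)^[j-1] (e0 p (c j)) := by
  obtain ⟨a', ha'⟩ := (phi_bijective p hodd hA).2 g
  set a : ℕ → A := fun t => if ht : t < p then a' ⟨t, ht⟩ else 1 with ha
  refine ⟨fun j => if i ≤ j then a (j - i) else 1, ?_⟩
  have hg : g = ∏ t ∈ Finset.range p, (Delta p A)^[t] (e0 p (a t)) := by
    rw [← ha', ← Fin.prod_univ_eq_prod_range]
    exact Finset.prod_congr rfl fun t _ => by simp only [ha, Fin.is_lt, dif_pos]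
  rw [hg, iter_prod]
  have L : ∏ t ∈ Finset.range p, (Delta p A)^[i-1] ((Delta p A)^[t] (e0 p (a t)))
      = ∏ s ∈ Finset.range (p+1-i), (Delta p A)^[i-1+s] (e0 p (a s)) := by
    refine (Finset.prod_subset (Finset.range_subset_range.2 (by omega)) fun t ht hts => ?_).symm.trans
      (Finset.prod_congr rfl fun s _ => ?_)
    · have h1 : t < p := Finset.mem_range.1 ht
      have h2 : ¬ t < p + 1 - i := fun hc => hts (Finset.mem_range.2 hc)
      rw [← Function.iterate_add_apply, iter_ge_p p hodd hA _ (by omega)]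
    · rw [← Function.iterate_add_apply]
  rw [L, ← Finset.Ico_add_one_right_eq_Icc, Finset.prod_Ico_eq_prod_range,
    show p + 1 - i = p + 1 - i by rfl]
  refine (Finset.prod_congr rfl fun s hs => ?_).symm
  simp only []
  rw [if_pos (by omega : i ≤ i + s), show i + s - i = s by omega,
    show i + s - 1 = i - 1 + s by omega]

lemma uniq_form (hA : ∀ a : A, a ^ p = 1)
    (i : ℕ) (hi1 : 1 ≤ i) (hip : i ≤ p) (c c' : ℕ → A)
    (h : ∏ j ∈ Finset.Icc i p, (Delta p A)^[j-1] (e0 p (c j))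
       = ∏ j ∈ Finset.Icc i p, (Delta p A)^[j-1] (e0 p (c' j))) :
    ∀ j ∈ Finset.Icc i p, c j = c' j := by
  rw [reindex p i hi1 hip, reindex p i hi1 hip] at h
  set e : ℕ → A := fun t => if i ≤ t + 1 then c (t+1) else 1 with he
  set e' : ℕ → A := fun t => if i ≤ t + 1 then c' (t+1) else 1 with he'
  have hkey : ∀ m, m < p → e m * (e' m)⁻¹ = 1 := by
    apply uniq p
    calc ∏ t ∈ Finset.range p, (Delta p A)^[t] (e0 p (e t * (e' t)⁻¹))
        = (∏ t ∈ Finset.range p, (Delta p A)^[t] (e0 p (e t)))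
          * (∏ t ∈ Finset.range p, (Delta p A)^[t] (e0 p (e' t)))⁻¹ := by
          rw [← Finset.prod_inv_distrib, ← Finset.prod_mul_distrib]
          exact Finset.prod_congr rfl fun t _ => by
            rw [e0_mul, e0_inv, iter_mul, iter_inv]
      _ = 1 := by rw [h, mul_inv_cancel]
  intro j hj
  obtain ⟨hj1, hj2⟩ := Finset.mem_Icc.1 hj
  have hm := hkey (j - 1) (by omega)
  rw [he, he'] at hm
  simp only [show j - 1 + 1 = j by omega, if_pos hj1] at hm
  rwa [mul_inv_eq_one] at hm

end StatementNine

/-- For an elementary abelian finite p-group A and 1 ≤ i ≤ p, every element of γ_i*(W(A))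
    can be written as λ_i(a_i)·λ_{i+1}(a_{i+1})·⋯·λ_p(a_p) with a_i,…,a_p ∈ A, and this
    representation is unique.
    (γ_i*(W(A)) = `gammaStar p A (i-1)`, λ_j(a) = `lamG p A a j`.) -/
theorem statement9 (p : ℕ) [Fact p.Prime] (hp : Odd p)
    (A : Type*) [CommGroup A] [Fintype A] (hA : ∀ a : A, a ^ p = 1)
    (i : ℕ) (hi1 : 1 ≤ i) (hip : i ≤ p) :
    (∀ x : W p A, x ∈ gammaStar p A (i - 1) →
      ∃ c : ℕ → A, x = inlW p A (∏ j ∈ Finset.Icc i p, lamG p A (c j) j))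
    ∧ (∀ c c' : ℕ → A,
        inlW p A (∏ j ∈ Finset.Icc i p, lamG p A (c j) j)
          = inlW p A (∏ j ∈ Finset.Icc i p, lamG p A (c' j) j) →
        ∀ j ∈ Finset.Icc i p, c j = c' j) := by
  constructor
  · intro x hx
    rw [StatementNine.gamma_eq] at hx
    obtain ⟨g, rfl⟩ := (StatementNine.mem_Dsub p).1 hx
    obtain ⟨c, hc⟩ := StatementNine.exist_form p hp hA i hi1 hip g
    refine ⟨c, ?_⟩
    rw [hc]
    rfl
  · intro c c' h
    have h2 : (∏ j ∈ Finset.Icc i p, lamG p A (c j) j)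
        = ∏ j ∈ Finset.Icc i p, lamG p A (c' j) j :=
      SemidirectProduct.inl_injective h
    exact StatementNine.uniq_form p hA i hi1 hip c c' h2
end

section
/- Let A be an elementary abelian finite p-group and let 1 ≤ i ≤ p−1. Then the map γ_i*(W(A))/γ_{i+1}*(W(A)) → γ_{i+1}*(W(A))/γ_{i+2}*(W(A)) sending the coset of a ∈ γ_i*(W(A)) to the coset of Δ(a) is a well-defined group isomorphism. -/
open Pointwise

open GGS

namespace GGSPf
open scoped commutatorElement
noncomputable section
variable (p : ℕ) {A : Type*} [CommGroup A]

lemma shiftAut_apply (k : Multiplicative (ZMod p)) (g : ZMod p → A) (i : ZMod p) :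
    (shiftAut p A k) g i = g (i + Multiplicative.toAdd k) := rfl

lemma shiftAut_inv_apply (k : Multiplicative (ZMod p)) (g : ZMod p → A) (i : ZMod p) :
    ((shiftAut p A k)⁻¹ : MulAut (ZMod p → A)) g i = g (i - Multiplicative.toAdd k) := rfl

lemma delta_apply (g : ZMod p → A) (i : ZMod p) :
    Delta p A g i = (g i)⁻¹ * g (i - 1) := by
  simp only [Delta, inlW, sigma, SemidirectProduct.mul_left, SemidirectProduct.inv_left,
    SemidirectProduct.mul_right, SemidirectProduct.inv_right,
    SemidirectProduct.left_inl, SemidirectProduct.right_inl, SemidirectProduct.left_inr,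
    SemidirectProduct.right_inr]
  simp [shiftAut_apply, shiftAut_inv_apply, sub_eq_add_neg]
  exact congrArg g (sub_eq_add_neg i 1)

lemma commutator_inl (g : ZMod p → A) (y : W p A) :
    ⁅inlW p A g, y⁆ = inlW p A (fun i => g i * (g (i + Multiplicative.toAdd y.right))⁻¹) := by
  ext
  · simp only [commutatorElement_def, inlW, SemidirectProduct.mul_left, SemidirectProduct.inv_left,
      SemidirectProduct.mul_right, SemidirectProduct.inv_right,
      SemidirectProduct.left_inl, SemidirectProduct.right_inl, SemidirectProduct.left_inr,
      SemidirectProduct.right_inr]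
    simp [shiftAut_apply, shiftAut_inv_apply, Pi.mul_apply, Pi.inv_apply, sub_eq_add_neg,
      mul_comm, mul_left_comm]
  · simp [commutatorElement_def, inlW, SemidirectProduct.mul_right, SemidirectProduct.inv_right,
      SemidirectProduct.right_inl]

lemma inl_delta (g : ZMod p → A) :
    inlW p A (Delta p A g) = ⁅(inlW p A g)⁻¹, (sigma p A)⁻¹⁆ := by
  have h : (⁅(inlW p A g)⁻¹, (sigma p A)⁻¹⁆ : W p A).right = 1 := by
    simp [commutatorElement_def, inlW, sigma, SemidirectProduct.mul_right,
      SemidirectProduct.inv_right, SemidirectProduct.right_inl, SemidirectProduct.right_inr]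
  have h2 : (⁅(inlW p A g)⁻¹, (sigma p A)⁻¹⁆ : W p A).left = Delta p A g := by
    rw [commutatorElement_def, Delta]
    congr 1
    group
  conv_lhs => rw [← h2]
  conv_rhs => rw [← SemidirectProduct.inl_left_mul_inr_right ⁅(inlW p A g)⁻¹, (sigma p A)⁻¹⁆]
  rw [h, map_one, mul_one]
  rfl

/-- Δ as a monoid hom (A commutative). -/
def DHom : (ZMod p → A) →* (ZMod p → A) :=
  MonoidHom.mk' (Delta p A) (fun v w => by
    funext i
    simp only [delta_apply, Pi.mul_apply]
    simp [mul_comm, mul_left_comm, mul_inv, mul_assoc])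

lemma DHom_apply (v : ZMod p → A) : DHom p v = Delta p A v := rfl

lemma delta_mul (v w : ZMod p → A) :
    Delta p A (v * w) = Delta p A v * Delta p A w := map_mul (DHom p) v w

lemma delta_inv (v : ZMod p → A) : Delta p A v⁻¹ = (Delta p A v)⁻¹ := map_inv (DHom p) v

/-- iterates of Δ, as monoid homs -/
def Dn : ℕ → ((ZMod p → A) →* (ZMod p → A))
  | 0 => MonoidHom.id _
  | n + 1 => (DHom p).comp (Dn n)

lemma Dn_zero (u : ZMod p → A) : Dn p 0 u = u := rfl
lemma Dn_succ (n : ℕ) (u : ZMod p → A) : Dn p (n + 1) u = Delta p A (Dn p n u) := rfl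

lemma delta_sh (k : ZMod p) (v : ZMod p → A) :
    Delta p A (fun i => v (i + k)) = fun i => Delta p A v (i + k) := by
  funext i
  simp only [delta_apply]
  rw [sub_add_eq_add_sub]

lemma Dn_sh (n : ℕ) (k : ZMod p) (u : ZMod p → A) :
    Dn p n (fun i => u (i + k)) = fun i => Dn p n u (i + k) := by
  induction n with
  | zero => rfl
  | succ n ih =>
    rw [Dn_succ, ih, delta_sh]
    rfl

lemma Dn_succ' (n : ℕ) (u : ZMod p → A) : Dn p (n + 1) u = Dn p n (Delta p A u) := by
  induction n with
  | zero => rfl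
  | succ n ih => rw [Dn_succ, ih, ← Dn_succ]

lemma Dn_add (n k : ℕ) (u : ZMod p → A) : Dn p (n + k) u = Dn p n (Dn p k u) := by
  induction k generalizing u with
  | zero => rfl
  | succ k ih => rw [show n + (k + 1) = (n + k) + 1 by ring, Dn_succ', ih, ← Dn_succ']

lemma range_antitone {n m : ℕ} (h : n ≤ m) : (Dn p (A := A) m).range ≤ (Dn p n).range := by
  rintro x ⟨u, rfl⟩
  obtain ⟨k, rfl⟩ := Nat.exists_eq_add_of_le h
  exact ⟨Dn p k u, (Dn_add p n k u).symm⟩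

variable [Fact p.Prime]

/-- kernel of Δ consists of constants -/
lemma delta_ker {v : ZMod p → A} (h : Delta p A v = 1) : ∃ c, v = fun _ => c := by
  haveI : NeZero p := ⟨(Fact.out : p.Prime).ne_zero⟩
  have h1 : ∀ i, v (i - 1) = v i := by
    intro i
    have := congrFun h i
    simp only [delta_apply, Pi.one_apply] at this
    rw [inv_mul_eq_one] at this
    exact this.symm
  have h2 : ∀ m : ℕ, ∀ i, v (i - (m : ZMod p)) = v i := by
    intro m
    induction m with
    | zero => simp
    | succ m ih =>
      intro i
      have : i - ((m : ZMod p) + 1) = (i - 1) - (m : ZMod p) := by ring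
      push_cast
      rw [this, ih (i - 1), h1]
  refine ⟨v 0, funext fun i => ?_⟩
  have := h2 i.val i
  rw [ZMod.natCast_val, ZMod.cast_id, sub_self] at this
  exact this.symm

lemma pow_zmod (a : A) (ha : a ^ p = 1) (n : ℕ) : a ^ n = a ^ ((n : ZMod p)).val := by
  haveI : NeZero p := ⟨(Fact.out : p.Prime).ne_zero⟩
  rw [ZMod.val_natCast]
  conv_lhs => rw [← Nat.mod_add_div n p, pow_add, pow_mul, ha, one_pow, mul_one]

lemma pow_val_sub (a : A) (ha : a ^ p = 1) (x y : ZMod p) :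
    a ^ (x - y).val * a ^ y.val = a ^ x.val := by
  haveI : NeZero p := ⟨(Fact.out : p.Prime).ne_zero⟩
  rw [← pow_add, pow_zmod p a ha ((x - y).val + y.val)]
  congr 2
  have : (((x - y).val + y.val : ℕ) : ZMod p) = x := by
    push_cast [ZMod.natCast_val, ZMod.cast_id]
    ring
  rw [this]

/-- the coefficient sequence: cseq m = Δ'^m of the indicator of 0, in ZMod p -/
def cseq : ℕ → ZMod p → ZMod p
  | 0 => fun i => if i = 0 then 1 else 0
  | m + 1 => fun i => cseq m (i - 1) - cseq m i

lemma choose_psub1 (k : ℕ) (hk : k ≤ p - 1) :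
    ((Nat.choose (p - 1) k : ℕ) : ZMod p) = (-1) ^ k := by
  induction k with
  | zero => simp
  | succ k ih =>
    have hp : p.Prime := Fact.out
    have hk' : k ≤ p - 1 := le_of_lt (Nat.lt_of_lt_of_le (Nat.lt_succ_self k) hk)
    have hlt : k + 1 < p := by
      have := hp.two_le; omega
    have hdvd : p ∣ Nat.choose p (k + 1) := hp.dvd_choose_self (Nat.succ_ne_zero k) hlt
    have hpascal : Nat.choose p (k + 1) = Nat.choose (p - 1) k + Nat.choose (p - 1) (k + 1) := by
      conv_lhs => rw [show p = (p - 1) + 1 by have := hp.two_le; omega]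
      exact Nat.choose_succ_succ (p - 1) k
    have h0 : ((Nat.choose p (k + 1) : ℕ) : ZMod p) = 0 :=
      (ZMod.natCast_eq_zero_iff _ _).mpr hdvd
    rw [hpascal] at h0
    push_cast at h0
    rw [ih hk'] at h0
    have : ((Nat.choose (p - 1) (k + 1) : ℕ) : ZMod p) = -(-1) ^ k := by linear_combination h0
    rw [this, pow_succ]
    ring

lemma cseq_eq (m : ℕ) (hm : m ≤ p - 1) (i : ZMod p) :
    cseq p m i = (-1) ^ (m - i.val) * (Nat.choose m i.val : ZMod p) := by
  haveI : NeZero p := ⟨(Fact.out : p.Prime).ne_zero⟩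
  have hp2 : 2 ≤ p := (Fact.out : p.Prime).two_le
  induction m generalizing i with
  | zero =>
    by_cases hi : i = 0
    · subst hi; simp [cseq]
    · have : i.val ≠ 0 := fun h => hi (by rwa [ZMod.val_eq_zero] at h)
      simp [cseq, hi, Nat.choose_eq_zero_of_lt (Nat.pos_of_ne_zero this)]
  | succ m ih =>
    have hm' : m ≤ p - 1 := le_of_lt (Nat.lt_of_lt_of_le (Nat.lt_succ_self m) hm)
    show cseq p m (i - 1) - cseq p m i = _
    by_cases hi : i = 0
    · subst hi
      have hneg : ((0 : ZMod p) - 1) = ((p - 1 : ℕ) : ZMod p) := by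
        push_cast [Nat.cast_sub (by omega : 1 ≤ p)]
        simp
      have hval : ((0 : ZMod p) - 1).val = p - 1 := by
        rw [hneg, ZMod.val_cast_of_lt (by omega)]
      rw [ih hm' (0 - 1), ih hm' 0, hval, ZMod.val_zero]
      rw [Nat.choose_eq_zero_of_lt (by omega : m < p - 1)]
      simp [pow_succ]
    · have hv : 1 ≤ i.val := Nat.pos_of_ne_zero (fun h => hi (by rwa [ZMod.val_eq_zero] at h))
      have hvlt : i.val < p := ZMod.val_lt i
      have hsub : (i - 1).val = i.val - 1 := by
        have h1 : (i - 1) = ((i.val - 1 : ℕ) : ZMod p) := by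
          push_cast [Nat.cast_sub hv]
          rw [ZMod.natCast_val, ZMod.cast_id]
        rw [h1, ZMod.val_cast_of_lt (by omega)]
      rw [ih hm' (i - 1), ih hm' i, hsub]
      rcases Nat.lt_or_ge m i.val with hmk | hmk
      · -- k ≥ m + 1
        rcases Nat.eq_or_lt_of_le hmk with heq | hlt
        · rw [← heq]
          simp [Nat.choose_eq_zero_of_lt (Nat.lt_succ_self m), Nat.sub_self,
            Nat.choose_self]
        · rw [Nat.choose_eq_zero_of_lt (by omega : m < i.val - 1),
            Nat.choose_eq_zero_of_lt (by omega : m < i.val),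
            Nat.choose_eq_zero_of_lt (by omega : m + 1 < i.val)]
          simp
      · -- k ≤ m
        have e1 : m - (i.val - 1) = (m - i.val) + 1 := by omega
        have e2 : m + 1 - i.val = (m - i.val) + 1 := by omega
        have pascal : Nat.choose (m + 1) i.val
            = Nat.choose m (i.val - 1) + Nat.choose m i.val := by
          have h := Nat.choose_succ_succ m (i.val - 1)
          simp only [Nat.succ_eq_add_one] at h
          rwa [show i.val - 1 + 1 = i.val by omega] at h
        rw [e1, e2, pascal]
        push_cast
        ring

lemma cseq_final (hp : Odd p) (i : ZMod p) : cseq p (p - 1) i = 1 := by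
  haveI : NeZero p := ⟨(Fact.out : p.Prime).ne_zero⟩
  have hvlt : i.val < p := ZMod.val_lt i
  rw [cseq_eq p (p - 1) le_rfl i, choose_psub1 p i.val (by omega)]
  rw [← pow_add, show p - 1 - i.val + i.val = p - 1 by omega]
  exact Even.neg_one_pow (Nat.Odd.sub_odd hp odd_one)

/-- constants are in the range of Δ^(p-1) -/
lemma const_mem_range (hp : Odd p) (hA : ∀ a : A, a ^ p = 1) (a : A) :
    (fun _ => a : ZMod p → A) ∈ (Dn p (p - 1)).range := by
  haveI : Fact (1 < p) := ⟨(Fact.out : p.Prime).one_lt⟩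
  refine ⟨fun t => if t = 0 then a else 1, ?_⟩
  have key : ∀ m : ℕ, Dn p m (fun t => if t = 0 then a else 1)
      = fun i => a ^ (cseq p m i).val := by
    intro m
    induction m with
    | zero =>
      funext i
      show (if i = 0 then a else 1) = _
      by_cases hi : i = 0 <;> simp [cseq, hi, ZMod.val_one]
    | succ m ih =>
      funext i
      rw [Dn_succ, ih, delta_apply]
      show (a ^ (cseq p m i).val)⁻¹ * a ^ (cseq p m (i - 1)).val
        = a ^ (cseq p m (i - 1) - cseq p m i).val
      rw [inv_mul_eq_iff_eq_mul, mul_comm]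
      exact (pow_val_sub p a (hA a) _ _).symm
  rw [key]
  funext i
  rw [cseq_final p hp i, ZMod.val_one, pow_one]

/-- key membership step: for g in range of Δ^n and any k, the "shift difference" is in Δ^(n+1) -/
lemma shift_diff_mem {n : ℕ} {g : ZMod p → A} (hg : g ∈ (Dn p n).range) (k : ZMod p) :
    (fun i => g i * (g (i + k))⁻¹) ∈ (Dn p (n + 1)).range := by
  obtain ⟨u, rfl⟩ := hg
  have key : ∀ m : ℕ, (fun i => Dn p n u i * (Dn p n u (i + (m : ZMod p)))⁻¹)
      ∈ (Dn p (n + 1)).range := by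
    intro m
    induction m with
    | zero =>
      have : (fun i => Dn p n u i * (Dn p n u (i + ((0 : ℕ) : ZMod p)))⁻¹) = (1 : ZMod p → A) := by
        funext i; simp
      rw [this]
      exact one_mem _
    | succ m ih =>
      have heq : (fun i => Dn p n u i * (Dn p n u (i + ((m + 1 : ℕ) : ZMod p)))⁻¹)
          = (fun i => Dn p n u i * (Dn p n u (i + (m : ZMod p)))⁻¹)
            * (fun i => Delta p A (Dn p n u) (i + ((m + 1 : ℕ) : ZMod p))) := by
        funext i
        simp only [Pi.mul_apply, delta_apply]
        have h1 : i + ((m + 1 : ℕ) : ZMod p) - 1 = i + (m : ZMod p) := by push_cast; ring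
        rw [h1]
        simp [mul_comm, mul_left_comm, mul_assoc]
      rw [heq]
      refine mul_mem ih ?_
      refine ⟨fun i => u (i + ((m + 1 : ℕ) : ZMod p)), ?_⟩
      rw [Dn_sh]
      funext i
      rw [Dn_succ]
  have := key k.val
  rwa [ZMod.natCast_val, ZMod.cast_id] at this

lemma gammaStar_eq (n : ℕ) :
    gammaStar p A n = Subgroup.map (inlW p A) (Dn p (A := A) n).range := by
  induction n with
  | zero =>
    show baseW p A = _
    have : (Dn p (A := A) 0).range = ⊤ := MonoidHom.range_eq_top.mpr (fun x => ⟨x, rfl⟩)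
    rw [this, ← MonoidHom.range_eq_map]
    rfl
  | succ n ih =>
    show ⁅gammaStar p A n, (⊤ : Subgroup (W p A))⁆ = _
    rw [ih]
    apply le_antisymm
    · rw [Subgroup.commutator_le]
      rintro x ⟨g, hg, rfl⟩ y -
      rw [commutator_inl]
      exact ⟨_, shift_diff_mem p hg _, rfl⟩
    · rintro x ⟨v, ⟨u, rfl⟩, rfl⟩
      rw [Dn_succ, inl_delta]
      exact Subgroup.commutator_mem_commutator
        (inv_mem ⟨Dn p n u, ⟨u, rfl⟩, rfl⟩) (Subgroup.mem_top _)

lemma mem_iff (n : ℕ) (v : ZMod p → A) :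
    inlW p A v ∈ gammaStar p A n ↔ v ∈ (Dn p n).range := by
  rw [gammaStar_eq]
  constructor
  · rintro ⟨g, hg, he⟩
    rwa [← SemidirectProduct.inl_injective he]
  · intro h
    exact ⟨v, h, rfl⟩

end
end GGSPf


/-- For an elementary abelian finite p-group A and 1 ≤ i ≤ p−1, the map
    γ_i*(W(A))/γ_{i+1}*(W(A)) → γ_{i+1}*(W(A))/γ_{i+2}*(W(A)) induced by Δ is a
    well-defined group isomorphism: Δ maps γ_i*(W(A)) into γ_{i+1}*(W(A)), two elements of
    γ_i*(W(A)) are congruent mod γ_{i+1}*(W(A)) iff their Δ-images are congruent mod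
    γ_{i+2}*(W(A)) (well-definedness and injectivity), Δ is a homomorphism modulo
    γ_{i+2}*(W(A)), and every coset of γ_{i+1}*(W(A))/γ_{i+2}*(W(A)) is hit (surjectivity).
    (γ_i*(W(A)) = `gammaStar p A (i-1)`.) -/
theorem statement10 (p : ℕ) [Fact p.Prime] (hp : Odd p)
    (A : Type*) [CommGroup A] [Fintype A] (hA : ∀ a : A, a ^ p = 1)
    (i : ℕ) (hi1 : 1 ≤ i) (hip : i ≤ p - 1) :
    (∀ v : ZMod p → A, inlW p A v ∈ gammaStar p A (i - 1) →
      inlW p A (Delta p A v) ∈ gammaStar p A i)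
    ∧ (∀ v w : ZMod p → A,
        inlW p A v ∈ gammaStar p A (i - 1) → inlW p A w ∈ gammaStar p A (i - 1) →
        (inlW p A (v⁻¹ * w) ∈ gammaStar p A i ↔
          inlW p A ((Delta p A v)⁻¹ * Delta p A w) ∈ gammaStar p A (i + 1)))
    ∧ (∀ v w : ZMod p → A,
        inlW p A v ∈ gammaStar p A (i - 1) → inlW p A w ∈ gammaStar p A (i - 1) →
        inlW p A (Delta p A (v * w) * (Delta p A v * Delta p A w)⁻¹) ∈ gammaStar p A (i + 1))
    ∧ (∀ x : W p A, x ∈ gammaStar p A i →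
        ∃ v : ZMod p → A, inlW p A v ∈ gammaStar p A (i - 1) ∧
          x * (inlW p A (Delta p A v))⁻¹ ∈ gammaStar p A (i + 1)) := by
  have hi : i - 1 + 1 = i := by omega
  refine ⟨?_, ?_, ?_, ?_⟩
  · intro v hv
    rw [GGSPf.mem_iff] at hv ⊢
    obtain ⟨u, rfl⟩ := hv
    exact ⟨u, by rw [← hi]; exact GGSPf.Dn_succ p (i - 1) u⟩
  · intro v w hv hw
    rw [GGSPf.mem_iff, GGSPf.mem_iff]
    constructor
    · rintro ⟨u, hu⟩
      exact ⟨u, by rw [GGSPf.Dn_succ, hu, GGSPf.delta_mul, GGSPf.delta_inv]⟩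
    · rintro ⟨u, hu⟩
      have h1 : Delta p A (v⁻¹ * w * (GGSPf.Dn p i u)⁻¹) = 1 := by
        rw [GGSPf.delta_mul, GGSPf.delta_mul, GGSPf.delta_inv, GGSPf.delta_inv,
          ← GGSPf.Dn_succ, hu]
        group
      obtain ⟨c, hc⟩ := GGSPf.delta_ker p h1
      have hconst : (fun _ => c : ZMod p → A) ∈ (GGSPf.Dn p (p - 1)).range :=
        GGSPf.const_mem_range p hp hA c
      have hle := GGSPf.range_antitone p hip hconst
      have heq : v⁻¹ * w = (fun _ => c) * GGSPf.Dn p i u := by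
        rw [← hc]; group
      rw [heq]
      exact mul_mem hle ⟨u, rfl⟩
  · intro v w _ _
    have h1 : Delta p A (v * w) * (Delta p A v * Delta p A w)⁻¹ = 1 := by
      rw [GGSPf.delta_mul]; group
    rw [h1, map_one]
    exact one_mem _
  · intro x hx
    rw [GGSPf.gammaStar_eq] at hx
    obtain ⟨g, ⟨u, rfl⟩, rfl⟩ := hx
    refine ⟨GGSPf.Dn p (i - 1) u, ?_, ?_⟩
    · rw [GGSPf.mem_iff]; exact ⟨u, rfl⟩
    · have h2 : Delta p A (GGSPf.Dn p (i - 1) u) = GGSPf.Dn p i u := by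
        rw [← GGSPf.Dn_succ, hi]
      rw [h2, mul_inv_cancel]
      exact one_mem _
end

section
/- Let A be an elementary abelian finite p-group. For every 2 ≤ i ≤ p, the subgroup γ_i(W(A)) consists exactly of the tuples in B(A) that are solutions of either of the following equivalent systems of word equations: (a) M((X−1)^ℓ) = 1 for all p−i+1 ≤ ℓ ≤ p−1; (b) M(f^{(ℓ)}(X)) = 1 for all 0 ≤ ℓ ≤ i−2, where f(X) = 1 + X + ⋯ + X^{p−1} and f^{(ℓ)} denotes the ℓ-th derivative. -/
open Pointwise

namespace GGS
noncomputable section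
variable (p : ℕ)

/-- the word M(q) associated to a polynomial q over 𝔽_p, evaluated at a tuple:
    M(q)(a₀,…,a_{p−1}) = a₀^{q₀}·a₁^{q₁}·⋯·a_{p−1}^{q_{p−1}}. -/
def Mword [NeZero p] (A : Type*) [CommGroup A] (q : Polynomial (ZMod p))
    (v : ZMod p → A) : A :=
  ∏ j : ZMod p, v j ^ (q.coeff j.val).val

end
end GGS

open GGS
open scoped commutatorElement

namespace Pf
open GGS Polynomial Finset

variable (p : ℕ) [Fact p.Prime] (A : Type*) [CommGroup A]

lemma ppos : 0 < p := (Fact.out : p.Prime).pos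
lemma p2 : 2 ≤ p := (Fact.out : p.Prime).two_le

def Dhom : (ZMod p → A) →* (ZMod p → A) :=
  MonoidHom.mk' (fun v j => v j * (v (j + 1))⁻¹) (by
    intro a b; funext j
    show (a j * b j) * ((a (j + 1)) * (b (j + 1)))⁻¹
        = (a j * (a (j + 1))⁻¹) * (b j * (b (j + 1))⁻¹)
    rw [mul_inv]
    exact mul_mul_mul_comm _ _ _ _)

@[simp] lemma Dhom_apply (v : ZMod p → A) (j : ZMod p) :
    Dhom p A v j = v j * (v (j + 1))⁻¹ := rfl

def Dpow : ℕ → ((ZMod p → A) →* (ZMod p → A))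
  | 0 => MonoidHom.id _
  | (n + 1) => (Dhom p A).comp (Dpow n)

@[simp] lemma Dpow_zero (v : ZMod p → A) : Dpow p A 0 v = v := rfl
@[simp] lemma Dpow_succ (n : ℕ) (v : ZMod p → A) :
    Dpow p A (n + 1) v = Dhom p A (Dpow p A n v) := rfl

lemma prod_shift (v : ZMod p → A) (c : ZMod p) :
    ∏ j : ZMod p, v (j + c) = ∏ j : ZMod p, v j :=
  Fintype.prod_equiv (Equiv.addRight c) _ _ (fun _ => rfl)

lemma prod_Dhom (v : ZMod p → A) : ∏ j : ZMod p, Dhom p A v j = 1 := by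
  simp only [Dhom_apply]
  rw [Finset.prod_mul_distrib, Finset.prod_inv_distrib, prod_shift p A v 1, mul_inv_cancel]


lemma val_inj' {a b : ZMod p} (h : a.val = b.val) : a = b := by
  have := ZMod.natCast_rightInverse (n := p)
  rw [← this a, ← this b, h]

lemma exists_Dhom (v : ZMod p → A) (hv : ∏ j : ZMod p, v j = 1) :
    ∃ w, Dhom p A w = v := by
  haveI : Fact (1 < p) := ⟨by have := p2 p; omega⟩
  have hp2 := p2 p
  refine ⟨fun j => (∏ k ∈ Finset.univ.filter (fun k : ZMod p => k.val < j.val), v k)⁻¹, ?_⟩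
  funext j
  rw [Dhom_apply]
  have hv1 : (1 : ZMod p).val = 1 := ZMod.val_one p
  rcases lt_or_ge (j.val + 1) p with hlt | hge
  · have h1 : (j + 1).val = j.val + 1 := by
      rw [ZMod.val_add_of_lt (by omega), hv1]
    have h2 : Finset.univ.filter (fun k : ZMod p => k.val < j.val + 1)
        = insert j (Finset.univ.filter (fun k : ZMod p => k.val < j.val)) := by
      ext k
      simp only [Finset.mem_filter, Finset.mem_univ, true_and, Finset.mem_insert]
      constructor
      · intro h
        rcases Nat.lt_or_ge k.val j.val with h' | h'
        · exact Or.inr h'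
        · exact Or.inl (val_inj' p (by omega))
      · rintro (rfl | h) <;> omega
    rw [h1, h2, Finset.prod_insert (by simp), inv_inv, mul_comm (v j), inv_mul_cancel_left]
  · have hjv : j.val = p - 1 := by have := ZMod.val_lt j; omega
    have h0 : j + 1 = 0 := by
      have : ((j.val : ℕ) : ZMod p) = j := ZMod.natCast_rightInverse j
      rw [← this, hjv]
      rw [← Nat.cast_one (R := ZMod p), ← Nat.cast_add]
      have : p - 1 + 1 = p := by omega
      rw [this, ZMod.natCast_self]
    have h0v : (j + 1).val = 0 := by rw [h0, ZMod.val_zero]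
    have h2 : Finset.univ.filter (fun k : ZMod p => k.val < (j+1).val) = ∅ := by
      rw [h0v]; ext k; simp
    have h3 : Finset.univ.filter (fun k : ZMod p => k.val < j.val) = Finset.univ.erase j := by
      ext k
      simp only [Finset.mem_filter, Finset.mem_univ, true_and, Finset.mem_erase, and_true]
      constructor
      · intro h hkj; rw [hkj] at h; omega
      · intro h
        have hk := ZMod.val_lt k
        rcases Nat.lt_or_ge k.val j.val with h' | h'
        · exact h'
        · exact absurd (val_inj' p (by omega)) h
    rw [h2, h3]
    have h4 := Finset.mul_prod_erase Finset.univ v (Finset.mem_univ j)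
    rw [hv] at h4
    simp only [Finset.prod_empty, inv_one, mul_one]
    rw [← inv_eq_of_mul_eq_one_right h4, inv_inv]

end Pf

namespace Pf
open GGS Polynomial Finset

variable (p : ℕ) [Fact p.Prime] (A : Type*) [CommGroup A]

lemma shiftAut_apply (k : Multiplicative (ZMod p)) (g : ZMod p → A) (i : ZMod p) :
    shiftAut p A k g i = g (i + Multiplicative.toAdd k) := rfl

def Pw : W p A →* A where
  toFun w := ∏ j : ZMod p, w.left j
  map_one' := by simp
  map_mul' a b := by
    show ∏ j : ZMod p, (a.left * shiftAut p A a.right b.left) j = _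
    simp only [Pi.mul_apply]
    rw [Finset.prod_mul_distrib]
    congr 1
    exact prod_shift p A b.left _

lemma comm_inl (m : ZMod p → A) (b : W p A) :
    ⁅inlW p A m, b⁆ = inlW p A (fun j => m j * (m (j + Multiplicative.toAdd b.right))⁻¹) := by
  have h := SemidirectProduct.inl_left_mul_inr_right ⁅inlW p A m, b⁆
  have hr : (⁅inlW p A m, b⁆).right = 1 := by
    simp [commutatorElement_def, inlW]
  rw [hr, map_one, mul_one] at h
  rw [← h]
  congr 1
  funext j
  simp only [commutatorElement_def, inlW, SemidirectProduct.mul_left,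
    SemidirectProduct.mul_right, SemidirectProduct.inv_left, SemidirectProduct.inv_right,
    SemidirectProduct.left_inl, SemidirectProduct.right_inl, one_mul, mul_one, inv_one,
    map_one, MulAut.one_apply, Pi.mul_apply, Pi.inv_apply, shiftAut_apply, toAdd_inv]
  rw [add_neg_cancel_right, mul_right_comm, mul_inv_cancel_right]

end Pf

namespace Pf
open GGS Polynomial Finset Subgroup

variable (p : ℕ) [Fact p.Prime] (A : Type*) [CommGroup A]

lemma Dhom_shift (v : ZMod p → A) (c : ZMod p) :
    Dhom p A (fun j => v (j + c)) = fun j => Dhom p A v (j + c) := by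
  funext j; simp only [Dhom_apply]; rw [add_right_comm]

lemma Dpow_shift (n : ℕ) (v : ZMod p → A) (c : ZMod p) :
    Dpow p A n (fun j => v (j + c)) = fun j => Dpow p A n v (j + c) := by
  induction n with
  | zero => rfl
  | succ k ih => rw [Dpow_succ, ih, Dhom_shift]; funext j; rw [Dpow_succ]

lemma shift_mem_range (n : ℕ) (v : ZMod p → A) (hv : v ∈ (Dpow p A n).range) (c : ZMod p) :
    (fun j => v (j + c)) ∈ (Dpow p A n).range := by
  obtain ⟨u, rfl⟩ := hv
  exact ⟨fun j => u (j + c), Dpow_shift p A n u c⟩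

lemma tele (m : ZMod p → A) (k : ℕ) :
    (fun j => m j * (m (j + (k : ZMod p)))⁻¹)
      = Dhom p A (∏ s ∈ Finset.range k, fun j => m (j + (s : ZMod p))) := by
  induction k with
  | zero => funext j; simp
  | succ t ih =>
    rw [Finset.prod_range_succ, map_mul, ← ih]
    funext j
    simp only [Pi.mul_apply, Dhom_apply]
    have h1 : (((t + 1 : ℕ)) : ZMod p) = (t : ZMod p) + 1 := by push_cast; ring
    have h2 : j + ((t : ZMod p) + 1) = (j + 1) + (t : ZMod p) := by ring
    rw [h1, h2]
    group

lemma lcs_one : Subgroup.lowerCentralSeries (⊤ : Subgroup (W p A)) 1 = Subgroup.map (inlW p A) (Dpow p A 1).range := by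
  have h0 : Subgroup.lowerCentralSeries (⊤ : Subgroup (W p A)) 1 = ⁅(⊤ : Subgroup (W p A)), ⊤⁆ := rfl
  rw [h0]
  apply le_antisymm
  · rw [Subgroup.commutator_le]
    intro a _ b _
    have hQr : (⁅a, b⁆).right = 1 := by
      have : SemidirectProduct.rightHom ⁅a, b⁆ = 1 := by
        rw [map_commutatorElement]
        exact commutatorElement_eq_one_iff_commute.mpr (Commute.all _ _)
      exact this
    have hQp : Pw p A ⁅a, b⁆ = 1 := by
      rw [map_commutatorElement]
      exact commutatorElement_eq_one_iff_commute.mpr (Commute.all _ _)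
    obtain ⟨u, hu⟩ := exists_Dhom p A (⁅a, b⁆).left hQp
    refine Subgroup.mem_map.2 ⟨(⁅a, b⁆).left, ⟨u, hu⟩, ?_⟩
    have h := SemidirectProduct.inl_left_mul_inr_right ⁅a, b⁆
    rw [hQr, map_one, mul_one] at h
    exact h
  · rintro x ⟨v, ⟨u, rfl⟩, rfl⟩
    have h : inlW p A (Dpow p A 1 u) = ⁅inlW p A u, sigma p A⁆ := by
      rw [comm_inl]; rfl
    rw [h]
    exact Subgroup.commutator_mem_commutator (Subgroup.mem_top _) (Subgroup.mem_top _)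

lemma lcs_eq (n : ℕ) :
    Subgroup.lowerCentralSeries (⊤ : Subgroup (W p A)) (n + 1) = Subgroup.map (inlW p A) (Dpow p A (n + 1)).range := by
  induction n with
  | zero => exact lcs_one p A
  | succ n ih =>
    have h0 : Subgroup.lowerCentralSeries (⊤ : Subgroup (W p A)) (n + 2)
        = ⁅Subgroup.lowerCentralSeries (⊤ : Subgroup (W p A)) (n + 1), ⊤⁆ := rfl
    rw [h0, ih]
    apply le_antisymm
    · rw [Subgroup.commutator_le]
      intro g hg b _
      obtain ⟨m, hm, rfl⟩ := hg
      rw [comm_inl]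
      refine Subgroup.mem_map.2 ⟨_, ?_, rfl⟩
      have htv : (((Multiplicative.toAdd b.right).val : ℕ) : ZMod p)
          = Multiplicative.toAdd b.right := ZMod.natCast_rightInverse _
      have ht := tele p A m (Multiplicative.toAdd b.right).val
      rw [htv] at ht
      rw [ht]
      have hprod : (∏ s ∈ Finset.range (Multiplicative.toAdd b.right).val,
          fun j => m (j + (s : ZMod p))) ∈ (Dpow p A (n + 1)).range := by
        apply Subgroup.prod_mem
        intro s _
        exact shift_mem_range p A (n + 1) m hm _
      obtain ⟨u, hu⟩ := hprod
      exact ⟨u, by rw [Dpow_succ, hu]⟩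
    · rintro x ⟨v, ⟨u, rfl⟩, rfl⟩
      have hmem : inlW p A (Dpow p A (n + 1) u) ∈ Subgroup.map (inlW p A) (Dpow p A (n + 1)).range :=
        Subgroup.mem_map.2 ⟨_, ⟨u, rfl⟩, rfl⟩
      have h : inlW p A (Dpow p A (n + 2) u) = ⁅inlW p A (Dpow p A (n + 1) u), sigma p A⁆ := by
        rw [comm_inl]; rfl
      rw [h]
      exact Subgroup.commutator_mem_commutator hmem (Subgroup.mem_top _)

end Pf

namespace Pf
open GGS Polynomial Finset

variable (p : ℕ) [Fact p.Prime] (A : Type*) [CommGroup A]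

lemma pow_mod (hA : ∀ a : A, a ^ p = 1) (v : A) (m : ℕ) : v ^ m = v ^ (m % p) := by
  conv_lhs => rw [← Nat.mod_add_div m p]
  rw [pow_add, pow_mul, hA, one_pow, mul_one]

lemma pow_add_val (hA : ∀ a : A, a ^ p = 1) (v : A) (a b : ZMod p) :
    v ^ (a + b).val = v ^ a.val * v ^ b.val := by
  rw [ZMod.val_add, ← pow_mod p A hA, pow_add]

lemma pow_sub_val (hA : ∀ a : A, a ^ p = 1) (v : A) (a b : ZMod p) :
    v ^ (a - b).val = v ^ a.val * (v ^ b.val)⁻¹ := by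
  have h : v ^ (a - b).val * v ^ b.val = v ^ a.val := by
    rw [← pow_add_val p A hA, sub_add_cancel]
  rw [← h, mul_inv_cancel_right]

lemma gsum : (∑ k ∈ Finset.range p, (X : Polynomial (ZMod p)) ^ k) = (X - 1) ^ (p - 1) := by
  have hp1 : p - 1 + 1 = p := by have := p2 p; omega
  have h1 : (X - 1 : Polynomial (ZMod p)) ≠ 0 := by
    have h := Polynomial.X_sub_C_ne_zero (R := ZMod p) 1
    simpa using h
  apply mul_left_cancel₀ h1
  have h2 : (X - 1 : Polynomial (ZMod p)) * (X - 1) ^ (p - 1) = (X - 1) ^ p := by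
    rw [← pow_succ', hp1]
  rw [h2, mul_comm, geom_sum_mul, sub_pow_char, one_pow]

lemma coeff_gsum (j : ZMod p) :
    ((X - 1 : Polynomial (ZMod p)) ^ (p - 1)).coeff j.val = 1 := by
  have hj := ZMod.val_lt j
  rw [← gsum p, Polynomial.finset_sum_coeff]
  simp [Polynomial.coeff_X_pow, Finset.sum_ite_eq, Finset.mem_range, hj]

lemma Mword_top (v : ZMod p → A) :
    Mword p A ((X - 1) ^ (p - 1)) v = ∏ j : ZMod p, v j := by
  haveI : Fact (1 < p) := ⟨by have := p2 p; omega⟩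
  refine Finset.prod_congr rfl (fun j _ => ?_)
  rw [coeff_gsum, ZMod.val_one, pow_one]

lemma Mword_top_Dhom (v : ZMod p → A) :
    Mword p A ((X - 1) ^ (p - 1)) (Dhom p A v) = 1 := by
  rw [Mword_top, prod_Dhom]

lemma natDegree_xsub (ℓ : ℕ) : ((X - 1 : Polynomial (ZMod p)) ^ ℓ).natDegree ≤ ℓ := by
  have h1 : (X - 1 : Polynomial (ZMod p)) = X - C 1 := by rw [Polynomial.C_1]
  rw [h1]
  calc ((X - C (1 : ZMod p)) ^ ℓ).natDegree ≤ ℓ * (X - C (1 : ZMod p)).natDegree :=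
        Polynomial.natDegree_pow_le
    _ = ℓ := by rw [Polynomial.natDegree_X_sub_C, mul_one]

lemma coeff_xsub_succ (ℓ : ℕ) (hℓ : ℓ ≤ p - 2) (j : ZMod p) :
    ((X - 1 : Polynomial (ZMod p)) ^ (ℓ + 1)).coeff j.val
      = ((X - 1 : Polynomial (ZMod p)) ^ ℓ).coeff ((j - 1).val)
        - ((X - 1 : Polynomial (ZMod p)) ^ ℓ).coeff j.val := by
  have hp2 := p2 p
  have hqd : ((X - 1 : Polynomial (ZMod p)) ^ ℓ).natDegree ≤ ℓ := natDegree_xsub p ℓ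
  have hstep : (X - 1 : Polynomial (ZMod p)) ^ (ℓ + 1) = ((X - 1) ^ ℓ) * X - (X - 1) ^ ℓ := by
    rw [pow_succ, mul_sub, mul_one]
  rw [hstep, Polynomial.coeff_sub]
  rcases Nat.eq_zero_or_pos j.val with h0 | hpos
  · have hj : j = 0 := (ZMod.val_eq_zero j).mp h0
    have hcast : ((p - 1 : ℕ) : ZMod p) + 1 = 0 := by
      rw [← Nat.cast_one (R := ZMod p), ← Nat.cast_add]
      have he : p - 1 + 1 = p := by omega
      rw [he, ZMod.natCast_self]
    have hj1 : (j - 1).val = p - 1 := by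
      rw [hj, zero_sub, ← eq_neg_of_add_eq_zero_left hcast,
        ZMod.val_cast_of_lt (by omega)]
    have hz : ((X - 1 : Polynomial (ZMod p)) ^ ℓ).coeff (p - 1) = 0 :=
      Polynomial.coeff_eq_zero_of_natDegree_lt (by omega)
    rw [h0, hj1, hz, Polynomial.coeff_mul_X_zero]
  · obtain ⟨m, hm⟩ : ∃ m, j.val = m + 1 := ⟨j.val - 1, by omega⟩
    have hj1 : (j - 1).val = m := by
      have hjc : ((j.val : ℕ) : ZMod p) = j := ZMod.natCast_rightInverse j
      have h1 : j - 1 = ((m : ℕ) : ZMod p) := by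
        rw [← hjc, hm]; push_cast; ring
      rw [h1, ZMod.val_cast_of_lt (by have := ZMod.val_lt j; omega)]
    rw [hm, hj1, Polynomial.coeff_mul_X]

lemma Mword_Dhom (hA : ∀ a : A, a ^ p = 1) (ℓ : ℕ) (hℓ : ℓ ≤ p - 2) (v : ZMod p → A) :
    Mword p A ((X - 1) ^ ℓ) (Dhom p A v) = (Mword p A ((X - 1) ^ (ℓ + 1)) v)⁻¹ := by
  set c : ZMod p → ZMod p := fun j => ((X - 1 : Polynomial (ZMod p)) ^ ℓ).coeff j.val with hc
  set A1 := ∏ j : ZMod p, v j ^ (c j).val with hA1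
  set A2 := ∏ j : ZMod p, v j ^ (c (j - 1)).val with hA2
  have hre : ∏ j : ZMod p, (v (j + 1)) ^ (c j).val = A2 := by
    rw [hA2]
    refine Fintype.prod_equiv (Equiv.addRight (1 : ZMod p)) _ _ (fun x => ?_)
    simp [add_sub_cancel_right]
  have h1 : Mword p A ((X - 1) ^ ℓ) (Dhom p A v) = A1 * A2⁻¹ := by
    calc Mword p A ((X - 1) ^ ℓ) (Dhom p A v)
        = ∏ j : ZMod p, (Dhom p A v j) ^ (c j).val := rfl
      _ = ∏ j : ZMod p, (v j ^ (c j).val * ((v (j + 1)) ^ (c j).val)⁻¹) :=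
          Finset.prod_congr rfl (fun j _ => by rw [Dhom_apply, mul_pow, inv_pow])
      _ = A1 * (∏ j : ZMod p, (v (j + 1)) ^ (c j).val)⁻¹ := by
          rw [Finset.prod_mul_distrib, Finset.prod_inv_distrib]
      _ = A1 * A2⁻¹ := by rw [hre]
  have h2 : Mword p A ((X - 1) ^ (ℓ + 1)) v = A2 * A1⁻¹ := by
    calc Mword p A ((X - 1) ^ (ℓ + 1)) v
        = ∏ j : ZMod p, v j ^ (((X - 1 : Polynomial (ZMod p)) ^ (ℓ + 1)).coeff j.val).val := rfl
      _ = ∏ j : ZMod p, (v j ^ (c (j - 1)).val * (v j ^ (c j).val)⁻¹) := by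
          refine Finset.prod_congr rfl (fun j _ => ?_)
          rw [coeff_xsub_succ p ℓ hℓ j, pow_sub_val p A hA]
      _ = A2 * A1⁻¹ := by rw [Finset.prod_mul_distrib, Finset.prod_inv_distrib]
  rw [h1, h2]
  group

lemma Mword_C_mul (hA : ∀ a : A, a ^ p = 1) (c : ZMod p) (hc : c ≠ 0)
    (q : Polynomial (ZMod p)) (v : ZMod p → A) :
    Mword p A (C c * q) v = 1 ↔ Mword p A q v = 1 := by
  have hpow : Mword p A (C c * q) v = (Mword p A q v) ^ c.val := by
    calc Mword p A (C c * q) v = ∏ j : ZMod p, v j ^ ((c * q.coeff j.val).val) :=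
          Finset.prod_congr rfl (fun j _ => by rw [Polynomial.coeff_C_mul])
      _ = ∏ j : ZMod p, (v j ^ (q.coeff j.val).val) ^ c.val :=
          Finset.prod_congr rfl (fun j _ => by
            rw [ZMod.val_mul, ← pow_mod p A hA, mul_comm c.val, pow_mul])
      _ = (Mword p A q v) ^ c.val := by rw [Finset.prod_pow]; rfl
  rw [hpow]
  constructor
  · intro h
    have hx : (Mword p A q v) ^ p = 1 := hA _
    have ho1 : orderOf (Mword p A q v) ∣ p := orderOf_dvd_of_pow_eq_one hx
    have ho2 : orderOf (Mword p A q v) ∣ c.val := orderOf_dvd_of_pow_eq_one h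
    rcases (Fact.out : p.Prime).eq_one_or_self_of_dvd _ ho1 with h1 | h1
    · exact orderOf_eq_one_iff.mp h1
    · exfalso
      rw [h1] at ho2
      have hcv : c.val ≠ 0 := fun h0 => hc ((ZMod.val_eq_zero c).mp h0)
      have := Nat.le_of_dvd (by omega) ho2
      have := ZMod.val_lt c
      omega
  · intro h; rw [h, one_pow]

lemma deriv_iter : ∀ ℓ : ℕ, ℓ ≤ p - 1 →
    ∃ c : ZMod p, c ≠ 0 ∧
      (fun q : Polynomial (ZMod p) => derivative q)^[ℓ] ((X - 1) ^ (p - 1))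
        = C c * (X - 1) ^ (p - 1 - ℓ) := by
  have hp2 := p2 p
  intro ℓ
  induction ℓ with
  | zero => exact fun _ => ⟨1, one_ne_zero, by simp⟩
  | succ n ih =>
    intro hℓ
    obtain ⟨c, hc, hcd⟩ := ih (by omega)
    have hm : p - 1 - n = (p - 1 - (n + 1)) + 1 := by omega
    refine ⟨c * ((p - 1 - n : ℕ) : ZMod p), mul_ne_zero hc ?_, ?_⟩
    · intro h
      rw [ZMod.natCast_eq_zero_iff] at h
      have := Nat.le_of_dvd (by omega) h
      omega
    · rw [Function.iterate_succ_apply', hcd, Polynomial.derivative_C_mul,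
        Polynomial.derivative_pow]
      have hd1 : derivative (X - 1 : Polynomial (ZMod p)) = 1 := by
        rw [derivative_sub, derivative_X, derivative_one, sub_zero]
      rw [hd1, mul_one, hm, Nat.add_sub_cancel, map_mul]
      ring

lemma range_iff (hA : ∀ a : A, a ^ p = 1) :
    ∀ n, n ≤ p - 1 → ∀ v : ZMod p → A,
      (v ∈ (Dpow p A n).range ↔
        ∀ ℓ : ℕ, p - n ≤ ℓ → ℓ ≤ p - 1 → Mword p A ((X - 1) ^ ℓ) v = 1) := by
  have hp2 := p2 p
  intro n
  induction n with
  | zero =>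
    intro _ v
    constructor
    · intro _ ℓ h1 h2; exfalso; omega
    · intro _; exact ⟨v, rfl⟩
  | succ n ih =>
    intro hn v
    constructor
    · rintro ⟨u, rfl⟩ ℓ h1 h2
      rw [Dpow_succ]
      rcases eq_or_lt_of_le h2 with he | hlt
      · rw [he]; exact Mword_top_Dhom p A _
      · have hℓ2 : ℓ ≤ p - 2 := by omega
        rw [Mword_Dhom p A hA ℓ hℓ2]
        have hu := (ih (by omega) (Dpow p A n u)).mp ⟨u, rfl⟩ (ℓ + 1) (by omega) (by omega)
        rw [hu, inv_one]
    · intro h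
      have hsum : ∏ j : ZMod p, v j = 1 := by
        rw [← Mword_top p A v]
        exact h (p - 1) (by omega) le_rfl
      obtain ⟨w, rfl⟩ := exists_Dhom p A v hsum
      have hw : w ∈ (Dpow p A n).range := by
        rw [ih (by omega)]
        intro ℓ h1 h2
        have h3 : ℓ - 1 ≤ p - 2 := by omega
        have h4 := h (ℓ - 1) (by omega) (by omega)
        rw [Mword_Dhom p A hA (ℓ - 1) h3] at h4
        have h5 : ℓ - 1 + 1 = ℓ := by omega
        rw [h5] at h4
        exact inv_eq_one.mp h4
      obtain ⟨u, rfl⟩ := hw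
      exact ⟨u, rfl⟩

end Pf

/-- For an elementary abelian finite p-group A and 2 ≤ i ≤ p, γ_i(W(A)) consists exactly of
    the tuples in B(A) satisfying (a) M((X−1)^ℓ) = 1 for p−i+1 ≤ ℓ ≤ p−1, and equally
    exactly of those satisfying (b) M(f^{(ℓ)}(X)) = 1 for 0 ≤ ℓ ≤ i−2, where
    f(X) = 1 + X + ⋯ + X^{p−1}.
    (γ_i(W(A)) = `Subgroup.lowerCentralSeries (⊤ : Subgroup (W p A)) (i-1)`.) -/
theorem statement11 (p : ℕ) [Fact p.Prime] (hp : Odd p)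
    (A : Type*) [CommGroup A] [Fintype A] (hA : ∀ a : A, a ^ p = 1)
    (i : ℕ) (hi2 : 2 ≤ i) (hip : i ≤ p) :
    ((Subgroup.lowerCentralSeries (⊤ : Subgroup (W p A)) (i - 1) : Subgroup (W p A)) : Set (W p A))
      = (fun v : ZMod p → A => inlW p A v) ''
          {v : ZMod p → A | ∀ ℓ : ℕ, p - i + 1 ≤ ℓ → ℓ ≤ p - 1 →
            Mword p A ((Polynomial.X - 1) ^ ℓ) v = 1}
    ∧ ((Subgroup.lowerCentralSeries (⊤ : Subgroup (W p A)) (i - 1) : Subgroup (W p A)) : Set (W p A))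
      = (fun v : ZMod p → A => inlW p A v) ''
          {v : ZMod p → A | ∀ ℓ : ℕ, ℓ ≤ i - 2 →
            Mword p A ((fun q : Polynomial (ZMod p) => Polynomial.derivative q)^[ℓ]
              (∑ k ∈ Finset.range p, Polynomial.X ^ k)) v = 1} := by
  have hp2 : 2 ≤ p := Pf.p2 p
  have hn : i - 1 = (i - 2) + 1 := by omega
  have hset : (((Pf.Dpow p A (i - 1)).range : Subgroup (ZMod p → A)) : Set (ZMod p → A))
      = {v : ZMod p → A | ∀ ℓ : ℕ, p - i + 1 ≤ ℓ → ℓ ≤ p - 1 →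
          Mword p A ((Polynomial.X - 1) ^ ℓ) v = 1} := by
    ext v
    rw [SetLike.mem_coe, Pf.range_iff p A hA (i - 1) (by omega) v]
    have he : p - (i - 1) = p - i + 1 := by omega
    rw [he]
    exact Iff.rfl
  have hmain : ((Subgroup.lowerCentralSeries (⊤ : Subgroup (W p A)) (i - 1) : Subgroup (W p A)) : Set (W p A))
      = (fun v : ZMod p → A => inlW p A v) ''
          {v : ZMod p → A | ∀ ℓ : ℕ, p - i + 1 ≤ ℓ → ℓ ≤ p - 1 →
            Mword p A ((Polynomial.X - 1) ^ ℓ) v = 1} := by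
    rw [hn, Pf.lcs_eq p A (i - 2), Subgroup.coe_map, ← hn, hset]
  refine ⟨hmain, ?_⟩
  rw [hmain]
  have hsets : {v : ZMod p → A | ∀ ℓ : ℕ, p - i + 1 ≤ ℓ → ℓ ≤ p - 1 →
        Mword p A ((Polynomial.X - 1) ^ ℓ) v = 1}
      = {v : ZMod p → A | ∀ ℓ : ℕ, ℓ ≤ i - 2 →
          Mword p A ((fun q : Polynomial (ZMod p) => Polynomial.derivative q)^[ℓ]
            (∑ k ∈ Finset.range p, Polynomial.X ^ k)) v = 1} := by
    ext v
    simp only [Set.mem_setOf_eq]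
    constructor
    · intro h ℓ hℓ
      obtain ⟨c, hc0, hcd⟩ := Pf.deriv_iter p ℓ (by omega)
      rw [Pf.gsum p, hcd, Pf.Mword_C_mul p A hA c hc0]
      exact h (p - 1 - ℓ) (by omega) (by omega)
    · intro h ℓ h1 h2
      obtain ⟨c, hc0, hcd⟩ := Pf.deriv_iter p (p - 1 - ℓ) (by omega)
      have h3 := h (p - 1 - ℓ) (by omega)
      rw [Pf.gsum p, hcd] at h3
      have h4 : p - 1 - (p - 1 - ℓ) = ℓ := by omega
      rw [h4] at h3
      rw [Pf.Mword_C_mul p A hA c hc0] at h3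
      exact h3
  rw [hsets]
end

section
/- Let A be an elementary abelian finite p-group and let a = (a_0,…,a_{p−1}) ∈ B(A). Then a ∈ γ_2(W(A)) if and only if a_0·a_1·⋯·a_{p−1} = 1; and a ∈ γ_3(W(A)) if and only if both a_0·a_1·⋯·a_{p−1} = 1 and a_0·a_1^2·a_2^3·⋯·a_{p−2}^{p−1} = 1. -/
open Pointwise

open GGS
open scoped commutatorElement

set_option linter.unusedSectionVars false

section Aux

variable {p : ℕ} [Fact p.Prime] {A : Type*} [CommGroup A]

lemma shiftAut_apply (G : Type*) [Group G] (k : Multiplicative (ZMod p)) (g : ZMod p → G)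
    (i : ZMod p) : (shiftAut p G k) g i = g (i + Multiplicative.toAdd k) := rfl

@[simp] lemma inlW_left (v : ZMod p → A) : (inlW p A v).left = v := rfl
@[simp] lemma inlW_right (v : ZMod p → A) : (inlW p A v).right = 1 := rfl

lemma pow_mod_p (hA : ∀ a : A, a ^ p = 1) (a : A) (n : ℕ) : a ^ (n % p) = a ^ n := by
  conv_rhs => rw [← Nat.div_add_mod n p, pow_add, pow_mul, hA, one_pow, one_mul]

/-- power with `ZMod p` exponent -/
def zp (a : A) (k : ZMod p) : A := a ^ k.val

lemma zp_natCast (hA : ∀ a : A, a ^ p = 1) (a : A) (n : ℕ) : zp a (n : ZMod p) = a ^ n := by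
  rw [zp, ZMod.val_natCast, pow_mod_p hA]

lemma zp_add (hA : ∀ a : A, a ^ p = 1) (a : A) (k l : ZMod p) :
    zp a (k + l) = zp a k * zp a l := by
  rw [zp, ZMod.val_add, pow_mod_p hA, pow_add]; rfl

@[simp] lemma zp_one_left (k : ZMod p) : zp (1 : A) k = 1 := one_pow _

lemma zp_mul (a b : A) (k : ZMod p) : zp (a * b) k = zp a k * zp b k := mul_pow _ _ _

lemma zp_inv (a : A) (k : ZMod p) : zp a⁻¹ k = (zp a k)⁻¹ := inv_pow _ _

lemma zp_neg (hA : ∀ a : A, a ^ p = 1) (a : A) (k : ZMod p) : zp a (-k) = (zp a k)⁻¹ := by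
  have h := zp_add hA a k (-k)
  rw [add_neg_cancel] at h
  have h0 : zp a (0 : ZMod p) = 1 := by rw [zp, ZMod.val_zero, pow_zero]
  rw [h0] at h
  exact eq_inv_of_mul_eq_one_right h.symm

def phi1 (v : ZMod p → A) : A := ∏ j : ZMod p, v j

def phi2 (v : ZMod p → A) : A := ∏ j : ZMod p, zp (v j) (j + 1)

lemma phi1_mul (v w : ZMod p → A) : phi1 (v * w) = phi1 v * phi1 w := by
  simp [phi1, Finset.prod_mul_distrib]

lemma phi1_inv (v : ZMod p → A) : phi1 v⁻¹ = (phi1 v)⁻¹ := by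
  simp [phi1]

lemma phi2_mul (v w : ZMod p → A) : phi2 (v * w) = phi2 v * phi2 w := by
  simp [phi2, zp_mul, Finset.prod_mul_distrib]

lemma phi2_inv (v : ZMod p → A) : phi2 v⁻¹ = (phi2 v)⁻¹ := by
  simp [phi2, zp_inv]

lemma phi1_shift (v : ZMod p → A) (m : ZMod p) :
    phi1 (fun i => v (i + m)) = phi1 v := by
  exact Fintype.prod_equiv (Equiv.addRight m) _ _ (fun j => rfl)

lemma phi2_shift (hA : ∀ a : A, a ^ p = 1) (v : ZMod p → A) (h1 : phi1 v = 1) (m : ZMod p) :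
    phi2 (fun i => v (i + m)) = phi2 v := by
  have step1 : phi2 (fun i => v (i + m)) = ∏ j : ZMod p, zp (v j) (j - m + 1) := by
    refine Fintype.prod_equiv (Equiv.addRight m) _ _ (fun j => ?_)
    simp [Equiv.coe_addRight]
  rw [step1]
  have step2 : ∀ j : ZMod p, zp (v j) (j - m + 1) = zp (v j) (j + 1) * zp (v j) (-m) := by
    intro j
    rw [← zp_add hA]
    ring_nf
  rw [Finset.prod_congr rfl (fun j _ => step2 j), Finset.prod_mul_distrib]
  have step3 : ∏ j : ZMod p, zp (v j) (-m) = zp (phi1 v) (-m) := by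
    simp only [zp, phi1]
    exact Finset.prod_pow _ _ _
  rw [step3, h1, zp_one_left, mul_one, phi2]

lemma prod_range_zmod (f : ZMod p → A) :
    ∏ k ∈ Finset.range p, f (k : ZMod p) = ∏ j : ZMod p, f j := by
  haveI : NeZero p := ⟨(Fact.out : p.Prime).ne_zero⟩
  refine Finset.prod_bij' (fun k _ => (k : ZMod p)) (fun j _ => j.val) ?_ ?_ ?_ ?_ ?_
  · intro a _; exact Finset.mem_univ _
  · intro j _; exact Finset.mem_range.mpr (ZMod.val_lt j)
  · intro a ha; exact ZMod.val_natCast_of_lt (Finset.mem_range.mp ha)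
  · intro j _; exact ZMod.natCast_rightInverse j
  · intro a _; rfl

lemma comm_inl (v : ZMod p → A) (y : W p A) :
    ⁅inlW p A v, y⁆ = inlW p A (fun i => v i * (v (i + Multiplicative.toAdd y.right))⁻¹) := by
  have : (inlW p A v) = SemidirectProduct.inl v := rfl
  apply SemidirectProduct.ext
  · funext i
    simp only [commutatorElement_def, SemidirectProduct.mul_left, SemidirectProduct.inv_left,
      SemidirectProduct.inv_right, SemidirectProduct.mul_right, inlW_left, inlW_right,
      SemidirectProduct.left_inl, SemidirectProduct.right_inl, shiftAut_apply, map_one,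
      MulAut.one_apply, Pi.mul_apply, Pi.inv_apply, one_mul, mul_one, inv_one,
      toAdd_one, toAdd_inv, add_zero]
    ring_nf
    rw [mul_right_comm (v i) (y.left i), mul_inv_cancel_right]
  · simp only [commutatorElement_def, SemidirectProduct.mul_right, inlW_right,
      SemidirectProduct.inv_right, one_mul, inv_one, mul_one, SemidirectProduct.right_inl]
    simp

def Phi : W p A →* A × Multiplicative (ZMod p) :=
  MonoidHom.mk' (fun x => (phi1 x.left, x.right)) (by
    intro x y
    refine Prod.ext ?_ (by simp)
    show phi1 ((x * y).left) = phi1 x.left * phi1 y.left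
    rw [SemidirectProduct.mul_left, phi1_mul]
    congr 1
    exact phi1_shift y.left (Multiplicative.toAdd x.right))

lemma mem_lcs1 (x : W p A) (hx : x ∈ Subgroup.lowerCentralSeries (⊤ : Subgroup (W p A)) 1) :
    x.right = 1 ∧ phi1 x.left = 1 := by
  have hker : Subgroup.lowerCentralSeries (⊤ : Subgroup (W p A)) 1 ≤ (Phi (p := p) (A := A)).ker := by
    rw [Subgroup.top_lowerCentralSeries_one, commutator_def, Subgroup.commutator_le]
    intro g _ h _
    rw [MonoidHom.mem_ker, map_commutatorElement]
    exact commutatorElement_eq_one_iff_commute.mpr (mul_comm _ _)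
  have := hker hx
  rw [MonoidHom.mem_ker] at this
  have h1 : phi1 x.left = 1 := congrArg Prod.fst this
  have h2 : x.right = 1 := congrArg Prod.snd this
  exact ⟨h2, h1⟩

def uF (v : ZMod p → A) (i : ZMod p) : A := ∏ k ∈ Finset.range (p - i.val), v (i + (k : ZMod p))

lemma delta_uF {v : ZMod p → A} (h : phi1 v = 1) (i : ZMod p) :
    uF v i * (uF v (i + 1))⁻¹ = v i := by
  haveI : NeZero p := ⟨(Fact.out : p.Prime).ne_zero⟩
  haveI : Fact (1 < p) := ⟨(Fact.out : p.Prime).one_lt⟩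
  by_cases hi : i.val + 1 = p
  · have h0 : (i + 1 : ZMod p) = 0 := by
      rw [← ZMod.val_eq_zero, ZMod.val_add, ZMod.val_one, hi, Nat.mod_self]
    have h1 : uF v (i + 1) = 1 := by
      rw [uF, h0]
      simpa using (prod_range_zmod v).trans h
    have h2 : uF v i = v i := by
      have : p - i.val = 1 := by omega
      rw [uF, this, Finset.prod_range_one]
      norm_num
    rw [h1, h2, inv_one, mul_one]
  · have hlt : i.val + 1 < p := lt_of_le_of_ne (Nat.succ_le_of_lt (ZMod.val_lt i)) hi
    have hval : (i + 1).val = i.val + 1 := by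
      rw [ZMod.val_add_of_lt]
      · rw [ZMod.val_one]
      · rw [ZMod.val_one]; exact hlt
    have hsub : p - i.val = (p - (i.val + 1)) + 1 := by omega
    have hstep : uF v i = uF v (i + 1) * v i := by
      rw [uF, hsub, Finset.prod_range_succ']
      congr 1
      · rw [uF, hval]
        refine Finset.prod_congr rfl (fun k _ => ?_)
        congr 1
        push_cast
        ring
      · norm_num
    rw [hstep, mul_right_comm]
    simp

lemma inl_eq_comm {v : ZMod p → A} (h : phi1 v = 1) :
    inlW p A v = ⁅inlW p A (uF v), sigma p A⁆ := by
  rw [comm_inl]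
  congr 1
  funext i
  rw [show Multiplicative.toAdd (sigma p A).right = 1 from rfl]
  exact (delta_uF h i).symm

lemma inl_mem_lcs1 (v : ZMod p → A) (h : phi1 v = 1) :
    inlW p A v ∈ Subgroup.lowerCentralSeries (⊤ : Subgroup (W p A)) 1 := by
  rw [inl_eq_comm h, Subgroup.top_lowerCentralSeries_one, commutator_def]
  exact Subgroup.commutator_mem_commutator (Subgroup.mem_top _) (Subgroup.mem_top _)

def NN (hA : ∀ a : A, a ^ p = 1) : Subgroup (W p A) where
  carrier := {x | x.right = 1 ∧ phi1 x.left = 1 ∧ phi2 x.left = 1}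
  one_mem' := by
    refine ⟨rfl, ?_, ?_⟩
    · simp [phi1]
    · simp [phi2]
  mul_mem' := by
    rintro x y ⟨hx1, hx2, hx3⟩ ⟨hy1, hy2, hy3⟩
    have hleft : (x * y).left = x.left * y.left := by
      rw [SemidirectProduct.mul_left, hx1, map_one, MulAut.one_apply]
    refine ⟨?_, ?_, ?_⟩
    · show (x * y).right = 1
      rw [SemidirectProduct.mul_right, hx1, hy1, mul_one]
    · show phi1 (x * y).left = 1
      rw [hleft, phi1_mul, hx2, hy2, mul_one]
    · show phi2 (x * y).left = 1
      rw [hleft, phi2_mul, hx3, hy3, mul_one]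
  inv_mem' := by
    rintro x ⟨hx1, hx2, hx3⟩
    have hleft : (x⁻¹).left = (x.left)⁻¹ := by
      rw [SemidirectProduct.inv_left, hx1, inv_one, map_one, MulAut.one_apply]
    refine ⟨?_, ?_, ?_⟩
    · show (x⁻¹).right = 1
      rw [SemidirectProduct.inv_right, hx1, inv_one]
    · show phi1 (x⁻¹).left = 1
      rw [hleft, phi1_inv, hx2, inv_one]
    · show phi2 (x⁻¹).left = 1
      rw [hleft, phi2_inv, hx3, inv_one]

lemma mem_lcs2 (hA : ∀ a : A, a ^ p = 1) (x : W p A)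
    (hx : x ∈ Subgroup.lowerCentralSeries (⊤ : Subgroup (W p A)) 2) :
    x.right = 1 ∧ phi1 x.left = 1 ∧ phi2 x.left = 1 := by
  have hle : Subgroup.lowerCentralSeries (⊤ : Subgroup (W p A)) 2 ≤ NN hA := by
    have h2 : Subgroup.lowerCentralSeries (⊤ : Subgroup (W p A)) 2 = ⁅Subgroup.lowerCentralSeries (⊤ : Subgroup (W p A)) 1, ⊤⁆ := rfl
    rw [h2, Subgroup.commutator_le]
    intro g hg y _
    obtain ⟨hg1, hg2⟩ := mem_lcs1 g hg
    have hgeq : inlW p A g.left = g := SemidirectProduct.ext rfl hg1.symm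
    rw [← hgeq, comm_inl]
    set m := Multiplicative.toAdd y.right
    have hc : (fun i => g.left i * (g.left (i + m))⁻¹)
        = g.left * (fun i => g.left (i + m))⁻¹ := rfl
    refine ⟨rfl, ?_, ?_⟩
    · show phi1 _ = 1
      rw [inlW_left, hc, phi1_mul, phi1_inv, phi1_shift, hg2, inv_one, mul_one]
    · show phi2 _ = 1
      rw [inlW_left, hc, phi2_mul, phi2_inv, phi2_shift hA _ hg2, mul_inv_cancel]
  exact hle hx

lemma phi2_eq_rangep (hA : ∀ a : A, a ^ p = 1) (v : ZMod p → A) :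
    phi2 v = ∏ r ∈ Finset.range p, v (r : ZMod p) ^ (r + 1) := by
  rw [phi2, ← prod_range_zmod (fun j => zp (v j) (j + 1))]
  refine Finset.prod_congr rfl (fun r _ => ?_)
  rw [show ((r : ZMod p) + 1) = (((r + 1 : ℕ)) : ZMod p) by push_cast; ring, zp_natCast hA]

lemma rangep_eq (hA : ∀ a : A, a ^ p = 1) (v : ZMod p → A) :
    ∏ r ∈ Finset.range p, v (r : ZMod p) ^ (r + 1)
      = ∏ r ∈ Finset.range (p - 1), v (r : ZMod p) ^ (r + 1) := by
  have hp1 : 1 ≤ p := (Fact.out : p.Prime).one_lt.le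
  have : p = (p - 1) + 1 := by omega
  rw [show Finset.range p = Finset.range ((p - 1) + 1) from congrArg Finset.range this,
    Finset.prod_range_succ, show (p - 1) + 1 = p by omega, hA, mul_one]

lemma phi1_uF (v : ZMod p → A) :
    phi1 (uF v) = ∏ r ∈ Finset.range p, v (r : ZMod p) ^ (r + 1) := by
  haveI : NeZero p := ⟨(Fact.out : p.Prime).ne_zero⟩
  set f : ℕ → A := fun r => v (r : ZMod p) with hf
  have step1 : phi1 (uF v) = ∏ i ∈ Finset.range p, ∏ j ∈ Finset.Ico i p, f j := by
    rw [phi1, ← prod_range_zmod (uF v)]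
    refine Finset.prod_congr rfl (fun i hi => ?_)
    rw [uF, ZMod.val_natCast_of_lt (Finset.mem_range.mp hi),
      Finset.prod_Ico_eq_prod_range]
    refine Finset.prod_congr rfl (fun k _ => ?_)
    simp only [hf]
    push_cast
    ring_nf
  rw [step1]
  have step2 : (∏ i ∈ Finset.range p, ∏ j ∈ Finset.Ico i p, f j)
      = ∏ j ∈ Finset.range p, ∏ _i ∈ Finset.range (j + 1), f j := by
    refine Finset.prod_comm' (fun x y => ?_)
    simp only [Finset.mem_range, Finset.mem_Ico]
    omega
  rw [step2]
  refine Finset.prod_congr rfl (fun j _ => ?_)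
  rw [Finset.prod_const, Finset.card_range]

lemma inl_mem_lcs2 (hA : ∀ a : A, a ^ p = 1) (v : ZMod p → A)
    (h1 : phi1 v = 1) (h2 : phi2 v = 1) :
    inlW p A v ∈ Subgroup.lowerCentralSeries (⊤ : Subgroup (W p A)) 2 := by
  have hu : phi1 (uF v) = 1 := by
    rw [phi1_uF, ← phi2_eq_rangep hA, h2]
  have h2' : Subgroup.lowerCentralSeries (⊤ : Subgroup (W p A)) 2 = ⁅Subgroup.lowerCentralSeries (⊤ : Subgroup (W p A)) 1, ⊤⁆ := rfl
  rw [inl_eq_comm h1, h2']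
  exact Subgroup.commutator_mem_commutator (inl_mem_lcs1 _ hu) (Subgroup.mem_top _)


end Aux

/-- For an elementary abelian finite p-group A and a = (a₀,…,a_{p−1}) ∈ B(A):
    a ∈ γ_2(W(A)) iff a₀·a₁·⋯·a_{p−1} = 1, and a ∈ γ_3(W(A)) iff additionally
    a₀·a₁²·a₂³·⋯·a_{p−2}^{p−1} = 1.
    (γ_i(W(A)) = `lowerCentralSeries (W p A) (i-1)`.) -/
theorem statement12 (p : ℕ) [Fact p.Prime] (hp : Odd p)
    (A : Type*) [CommGroup A] [Fintype A] (hA : ∀ a : A, a ^ p = 1)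
    (v : ZMod p → A) :
    (inlW p A v ∈ Subgroup.lowerCentralSeries (⊤ : Subgroup (W p A)) 1 ↔ ∏ j : ZMod p, v j = 1)
    ∧ (inlW p A v ∈ Subgroup.lowerCentralSeries (⊤ : Subgroup (W p A)) 2 ↔
        (∏ j : ZMod p, v j = 1 ∧
          ∏ r ∈ Finset.range (p - 1), v (r : ZMod p) ^ (r + 1) = 1)) := by
  constructor
  · constructor
    · intro h
      have := (mem_lcs1 _ h).2
      simpa [phi1] using this
    · intro h
      exact inl_mem_lcs1 v (by simpa [phi1] using h)
  · constructor
    · intro h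
      obtain ⟨_, h1, h2⟩ := mem_lcs2 hA _ h
      rw [inlW_left] at h1 h2
      refine ⟨by simpa [phi1] using h1, ?_⟩
      rw [phi2_eq_rangep hA, rangep_eq hA] at h2
      exact h2
    · rintro ⟨h1, h2⟩
      apply inl_mem_lcs2 hA
      · simpa [phi1] using h1
      · rw [phi2_eq_rangep hA, rangep_eq hA]
        exact h2
end

section
/- Let G be a finite p-group, let j ≥ 1, and let T be a σ-invariant subgroup of B(γ_j(G)). Then, modulo B(γ_{j+1}(G)), one has [T, W(G)] = [T, ⟨σ⟩] = Δ(T) (in particular Δ(T)·B(γ_{j+1}(G)) is a subgroup). Consequently, for every subgroup J ≤ γ_j(G) and every k ≥ 1, one has [Δ^{k−1}(B(J)), W(G)] ≡ [Δ^{k−1}(B(J)), ⟨σ⟩] ≡ Δ^k(B(J)) modulo B(γ_{j+1}(G)). -/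
open Pointwise

open GGS Pointwise Subgroup
open scoped commutatorElement

namespace GGSProof

variable (p : ℕ) (G : Type*) [Group G]

lemma shiftAut_apply (k : Multiplicative (ZMod p)) (g : ZMod p → G) (i : ZMod p) :
    shiftAut p G k g i = g (i + Multiplicative.toAdd k) := rfl

lemma shiftAut_inv_apply (k : Multiplicative (ZMod p)) (g : ZMod p → G) (i : ZMod p) :
    ((shiftAut p G k)⁻¹) g i = g (i - Multiplicative.toAdd k) := rfl

/-- shift by `+c` -/
def sh (c : ZMod p) (v : ZMod p → G) : ZMod p → G := fun i => v (i + c)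

lemma shiftAut_eq_sh (c : ZMod p) (v : ZMod p → G) :
    shiftAut p G (Multiplicative.ofAdd c) v = sh p G c v := rfl

lemma sh_mul (c : ZMod p) (v w : ZMod p → G) : sh p G c (v * w) = sh p G c v * sh p G c w := rfl

lemma sh_inv (c : ZMod p) (v : ZMod p → G) : sh p G c v⁻¹ = (sh p G c v)⁻¹ := rfl

lemma sh_one (c : ZMod p) : sh p G c 1 = 1 := rfl

lemma sh_sh (c d : ZMod p) (v : ZMod p → G) : sh p G c (sh p G d v) = sh p G (c + d) v := by
  funext i; simp [sh, add_assoc]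

lemma delta_eq (v : ZMod p → G) : Delta p G v = v⁻¹ * sh p G (-1) v := by
  funext i
  simp [Delta, sigma, inlW, shiftAut_apply, shiftAut_inv_apply, sh, sub_eq_add_neg]
  exact congrArg v (sub_eq_add_neg i 1)

lemma delta_one : Delta p G 1 = 1 := by
  rw [delta_eq]; simp [sh_one]

lemma sh_delta (c : ZMod p) (v : ZMod p → G) :
    sh p G c (Delta p G v) = Delta p G (sh p G c v) := by
  rw [delta_eq, delta_eq, sh_mul, sh_inv, sh_sh, sh_sh, add_comm]

lemma comm_inl_inr (v : ZMod p → G) (c : ZMod p) :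
    ⁅inlW p G v, SemidirectProduct.inr (φ := shiftAut p G) (Multiplicative.ofAdd c)⁆
      = inlW p G (v * (sh p G c v)⁻¹) := by
  apply SemidirectProduct.ext <;>
    simp [commutatorElement_def, inlW, shiftAut_eq_sh, shiftAut_apply, shiftAut_inv_apply,
      sh_inv, sh_one]

lemma delta_comm (v : ZMod p → G) :
    inlW p G (Delta p G v) = ⁅(inlW p G v)⁻¹, (sigma p G)⁻¹⁆ := by
  have h : ⁅(inlW p G v)⁻¹, (sigma p G)⁻¹⁆
      = (inlW p G v)⁻¹ * (sigma p G)⁻¹ * inlW p G v * sigma p G := by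
    rw [commutatorElement_def, inv_inv, inv_inv]
  set x := (inlW p G v)⁻¹ * (sigma p G)⁻¹ * inlW p G v * sigma p G with hx
  have hr : x.right = 1 := by
    simp [hx, inlW, sigma]
  rw [h]
  have := SemidirectProduct.inl_left_mul_inr_right x
  rw [hr, map_one, mul_one] at this
  exact this

end GGSProof
namespace GGSProof
set_option linter.unusedSectionVars false

variable (p : ℕ) (G : Type*) [Group G]

lemma inl_mem_BSub {H : Subgroup G} {v : ZMod p → G} :
    inlW p G v ∈ BSub p G H ↔ ∀ i, v i ∈ H := by
  constructor
  · rintro ⟨w, hw, hEq⟩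
    have : w = v := SemidirectProduct.inl_injective hEq
    subst this
    exact fun i => ((Subgroup.mem_pi Set.univ).mp hw) i (Set.mem_univ i)
  · intro h
    exact ⟨v, (Subgroup.mem_pi Set.univ).mpr fun i _ => h i, rfl⟩

instance BSub_normal (H : Subgroup G) [H.Normal] : (BSub p G H).Normal := by
  constructor
  rintro n hn w
  obtain ⟨v, hv, rfl⟩ := Subgroup.mem_map.mp hn
  have hv' : ∀ i, v i ∈ H := fun i => ((Subgroup.mem_pi Set.univ).mp hv) i (Set.mem_univ i)
  have key : w * inlW p G v * w⁻¹
      = inlW p G (w.left * shiftAut p G w.right v * w.left⁻¹) := by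
    apply SemidirectProduct.ext
    · funext i
      simp [inlW, shiftAut_apply]
    · simp [inlW]
  rw [key]
  exact (inl_mem_BSub p G).mpr fun i =>
    Subgroup.Normal.conj_mem ‹H.Normal› _ (hv' _) _

def NN (j : ℕ) : Subgroup (W p G) := BSub p G ((⊤ : Subgroup G).lowerCentralSeries j)

instance (j : ℕ) : (NN p G j).Normal := BSub_normal p G _

def qh (j : ℕ) : W p G →* W p G ⧸ NN p G j := QuotientGroup.mk' _

def rh (j : ℕ) : (ZMod p → G) →* W p G ⧸ NN p G j := (qh p G j).comp (inlW p G)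

lemma qh_surjective (j : ℕ) : Function.Surjective (qh p G j) :=
  QuotientGroup.mk'_surjective _

lemma rh_eq_one {j : ℕ} {n : ZMod p → G} (hn : ∀ i, n i ∈ (⊤ : Subgroup G).lowerCentralSeries j) :
    rh p G j n = 1 :=
  (QuotientGroup.eq_one_iff _).mpr ((inl_mem_BSub p G).mpr hn)

lemma rh_eq_exists {j : ℕ} {v z : ZMod p → G} (h : rh p G j z = rh p G j v) :
    ∃ n, (∀ i, n i ∈ (⊤ : Subgroup G).lowerCentralSeries j) ∧ v = z * n := by
  obtain ⟨w, hw, hzw⟩ := (QuotientGroup.mk'_eq_mk' (N := NN p G j)).mp h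
  obtain ⟨n, hn, rfl⟩ := Subgroup.mem_map.mp hw
  refine ⟨n, fun i => ((Subgroup.mem_pi Set.univ).mp hn) i (Set.mem_univ i), ?_⟩
  rw [← map_mul] at hzw
  exact (SemidirectProduct.inl_injective hzw).symm

lemma rh_central {j : ℕ} {v : ZMod p → G} (hv : ∀ i, v i ∈ (⊤ : Subgroup G).lowerCentralSeries j)
    (g : ZMod p → G) : Commute (rh p G (j+1) v) (rh p G (j+1) g) := by
  rw [← commutatorElement_eq_one_iff_commute, ← map_commutatorElement]
  apply rh_eq_one
  intro i
  show ⁅v i, g i⁆ ∈ (⊤ : Subgroup G).lowerCentralSeries (j+1)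
  exact Subgroup.commutator_mem_commutator (hv i) (Subgroup.mem_top _)

lemma delta_mul (v w : ZMod p → G) :
    Delta p G (v * w) = w⁻¹ * Delta p G v * sh p G (-1) w := by
  rw [delta_eq, delta_eq, sh_mul, mul_inv_rev]
  group

lemma delta_inv (v : ZMod p → G) : Delta p G v⁻¹ = v * (sh p G (-1) v)⁻¹ := by
  rw [delta_eq, inv_inv, sh_inv]

lemma rh_delta_mul {j : ℕ} {v w : ZMod p → G}
    (hw : ∀ i, w i ∈ (⊤ : Subgroup G).lowerCentralSeries j) :
    rh p G (j+1) (Delta p G (v * w))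
      = rh p G (j+1) (Delta p G v) * rh p G (j+1) (Delta p G w) := by
  have hwi : ∀ i, (w⁻¹) i ∈ (⊤ : Subgroup G).lowerCentralSeries j := fun i => inv_mem (hw i)
  have c : Commute (rh p G (j+1) w⁻¹) (rh p G (j+1) (Delta p G v)) :=
    rh_central p G hwi _
  rw [delta_mul, map_mul, map_mul, c.eq, mul_assoc, ← map_mul, ← delta_eq]

lemma rh_delta_inv {j : ℕ} {v : ZMod p → G}
    (hv : ∀ i, v i ∈ (⊤ : Subgroup G).lowerCentralSeries j) :
    rh p G (j+1) (Delta p G v⁻¹) = (rh p G (j+1) (Delta p G v))⁻¹ := by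
  have c : Commute (rh p G (j+1) v) (rh p G (j+1) (sh p G (-1) v)) :=
    rh_central p G hv _
  rw [delta_inv, map_mul, map_inv, delta_eq, map_mul, mul_inv_rev, map_inv, inv_inv,
    c.inv_right.eq]

lemma rh_delta_congr {j : ℕ} {v z : ZMod p → G}
    (h : rh p G (j+1) z = rh p G (j+1) v) :
    rh p G (j+1) (Delta p G v) = rh p G (j+1) (Delta p G z) := by
  obtain ⟨n, hn, rfl⟩ := rh_eq_exists p G h
  have hshn : ∀ i, sh p G (-1) n i ∈ (⊤ : Subgroup G).lowerCentralSeries (j+1) := fun i => hn _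
  rw [delta_mul, map_mul, map_mul, map_inv, rh_eq_one p G hn, rh_eq_one p G hshn,
    inv_one, one_mul, mul_one]

end GGSProof
namespace GGSProof
set_option linter.unusedSectionVars false

variable (p : ℕ) (G : Type*) [Group G]

lemma sh_zero (v : ZMod p → G) : sh p G 0 v = v := by
  funext i; simp [sh]

lemma natCast_val_cast [NeZero p] (c : ZMod p) : ((c.val : ℕ) : ZMod p) = c :=
  ZMod.natCast_rightInverse c

lemma sigma_pow (n : ℕ) :
    sigma p G ^ n = SemidirectProduct.inr (φ := shiftAut p G)
      (Multiplicative.ofAdd ((n : ZMod p))) := by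
  rw [sigma, ← map_pow]
  congr 1
  rw [← ofAdd_nsmul]
  congr 1
  simp

lemma sigma_zpow (m : ℤ) :
    sigma p G ^ m = SemidirectProduct.inr (φ := shiftAut p G)
      (Multiplicative.ofAdd ((m : ZMod p))) := by
  rw [sigma, ← map_zpow]
  congr 1
  rw [← ofAdd_zsmul]
  congr 1
  simp

lemma inr_mem_zpowers [NeZero p] (c : Multiplicative (ZMod p)) :
    SemidirectProduct.inr (φ := shiftAut p G) c ∈ Subgroup.zpowers (sigma p G) := by
  have h : sigma p G ^ ((Multiplicative.toAdd c).val) = SemidirectProduct.inr c := by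
    rw [sigma_pow, natCast_val_cast]
    simp
  exact h ▸ Subgroup.npow_mem_zpowers _ _

section Tshift

variable (T : Subgroup (ZMod p → G))

lemma shiftn_mem (hT2 : ∀ v ∈ T, (fun i => v (i-1)) ∈ T) (m : ℕ)
    {v : ZMod p → G} (hv : v ∈ T) : (fun i => v (i - (m : ZMod p))) ∈ T := by
  induction m with
  | zero => simpa using hv
  | succ n ih =>
    have h := hT2 _ ih
    have : (fun i => v (i - ((n+1 : ℕ) : ZMod p)))
        = (fun i => (fun i' => v (i' - (n : ZMod p))) (i - 1)) := by
      funext i; push_cast; ring_nf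
    rw [this]; exact h

lemma sh_mem [NeZero p] (hT2 : ∀ v ∈ T, (fun i => v (i-1)) ∈ T) (c : ZMod p)
    {v : ZMod p → G} (hv : v ∈ T) : sh p G c v ∈ T := by
  have h := shiftn_mem p G T hT2 ((-c).val) hv
  have : (fun i => v (i - (((-c).val : ℕ) : ZMod p))) = sh p G c v := by
    funext i; rw [natCast_val_cast, sub_neg_eq_add]; rfl
  rwa [this] at h

end Tshift

def wseq (v : ZMod p → G) : ℕ → (ZMod p → G)
  | 0 => 1
  | n+1 => wseq v n * sh p G ((n+1 : ℕ) : ZMod p) v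

lemma wseq_mem [NeZero p] (T : Subgroup (ZMod p → G))
    (hT2 : ∀ v ∈ T, (fun i => v (i-1)) ∈ T) {v : ZMod p → G} (hv : v ∈ T) (n : ℕ) :
    wseq p G v n ∈ T := by
  induction n with
  | zero => exact one_mem T
  | succ n ih => exact mul_mem ih (sh_mem p G T hT2 _ hv)

lemma sh_gamma {H : Subgroup G} {v : ZMod p → G} (hv : ∀ i, v i ∈ H) (c : ZMod p) :
    ∀ i, sh p G c v i ∈ H := fun i => hv _

lemma delta_gamma {H : Subgroup G} {v : ZMod p → G} (hv : ∀ i, v i ∈ H) :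
    ∀ i, Delta p G v i ∈ H := by
  rw [delta_eq]
  exact fun i => mul_mem (inv_mem (hv i)) (hv _)

lemma rh_ucv [NeZero p] {j : ℕ} (T : Subgroup (ZMod p → G))
    (hT1 : ∀ v ∈ T, ∀ i, v i ∈ (⊤ : Subgroup G).lowerCentralSeries j)
    (hT2 : ∀ v ∈ T, (fun i => v (i-1)) ∈ T)
    (n : ℕ) {v : ZMod p → G} (hv : v ∈ T) :
    rh p G (j+1) (v * (sh p G ((n : ZMod p)) v)⁻¹)
      = rh p G (j+1) (Delta p G (wseq p G v n)) := by
  induction n with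
  | zero => simp [wseq, delta_one, sh_zero]
  | succ n ih =>
    have hshc : ∀ i, sh p G ((n+1 : ℕ) : ZMod p) v i ∈ (⊤ : Subgroup G).lowerCentralSeries j :=
      sh_gamma p G (hT1 v hv) _
    have hshn : ∀ i, sh p G ((n : ℕ) : ZMod p) v i ∈ (⊤ : Subgroup G).lowerCentralSeries j :=
      sh_gamma p G (hT1 v hv) _
    rw [show wseq p G v (n+1) = wseq p G v n * sh p G ((n+1 : ℕ) : ZMod p) v from rfl]
    rw [rh_delta_mul p G hshc, ← ih]
    have hds : Delta p G (sh p G ((n+1 : ℕ) : ZMod p) v)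
        = (sh p G ((n+1 : ℕ) : ZMod p) v)⁻¹ * sh p G ((n : ℕ) : ZMod p) v := by
      rw [delta_eq, sh_sh]
      congr 2
      push_cast; ring
    rw [hds]
    rw [map_mul, map_inv, map_mul, map_inv, map_mul, map_inv]
    have hc : Commute (rh p G (j+1) (sh p G ((n : ℕ) : ZMod p) v))
        ((rh p G (j+1) (sh p G ((n+1 : ℕ) : ZMod p) v))⁻¹) :=
      (rh_central p G hshn _).inv_right
    rw [mul_assoc (rh p G (j+1) v), ← hc.eq, inv_mul_cancel_left]

end GGSProof
namespace GGSProof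
set_option linter.unusedSectionVars false

open Subgroup

variable (p : ℕ) (G : Type*) [Group G]

lemma w_decomp (w : W p G) :
    w = SemidirectProduct.inr (φ := shiftAut p G) w.right
        * inlW p G (shiftAut p G w.right⁻¹ w.left) := by
  apply SemidirectProduct.ext
  · funext i
    simp [inlW, shiftAut_apply]
  · simp [inlW]

lemma main [NeZero p] (j : ℕ) (T : Subgroup (ZMod p → G))
    (hT1 : ∀ v ∈ T, ∀ i, v i ∈ (⊤ : Subgroup G).lowerCentralSeries j)
    (hT2 : ∀ v ∈ T, (fun i => v (i-1)) ∈ T) :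
    ⁅(T.map (inlW p G)).map (qh p G (j+1)), (⊤ : Subgroup (W p G ⧸ NN p G (j+1)))⁆
      = ⁅(T.map (inlW p G)).map (qh p G (j+1)),
          (Subgroup.zpowers (sigma p G)).map (qh p G (j+1))⁆
    ∧ ((⁅(T.map (inlW p G)).map (qh p G (j+1)),
          (Subgroup.zpowers (sigma p G)).map (qh p G (j+1))⁆ :
            Subgroup (W p G ⧸ NN p G (j+1))) : Set (W p G ⧸ NN p G (j+1)))
      = (fun v => rh p G (j+1) (Delta p G v)) '' (T : Set (ZMod p → G)) := by
  set Q := qh p G (j+1) with hQ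
  constructor
  · apply le_antisymm
    · rw [Subgroup.commutator_le]
      intro a ha b _
      obtain ⟨x, hx, rfl⟩ := Subgroup.mem_map.mp ha
      obtain ⟨v, hv, rfl⟩ := Subgroup.mem_map.mp hx
      obtain ⟨w, rfl⟩ := qh_surjective p G (j+1) b
      have hid : ∀ a b c : W p G ⧸ NN p G (j+1), ⁅a, b*c⁆ = ⁅a, b⁆ * (b * ⁅a, c⁆ * b⁻¹) := by
        intros a b c
        group
      rw [show Q w = Q (SemidirectProduct.inr (φ := shiftAut p G) w.right
            * inlW p G (shiftAut p G w.right⁻¹ w.left)) from by rw [← w_decomp]]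
      rw [map_mul, hid]
      have h1 : ⁅Q (inlW p G v), Q (inlW p G (shiftAut p G w.right⁻¹ w.left))⁆ = 1 := by
        apply commutatorElement_eq_one_iff_commute.mpr
        exact rh_central p G (hT1 v hv) _
      rw [h1]
      simp only [mul_one, mul_inv_cancel]
      exact Subgroup.commutator_mem_commutator ha
        (Subgroup.mem_map_of_mem Q (inr_mem_zpowers p G _))
    · exact Subgroup.commutator_mono le_rfl le_top
  · set R : Set (W p G ⧸ NN p G (j+1)) :=
        (fun v => rh p G (j+1) (Delta p G v)) '' (T : Set (ZMod p → G)) with hR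
    have hD : ∃ D : Subgroup (W p G ⧸ NN p G (j+1)), (D : Set _) = R := by
      refine ⟨{ carrier := R
                one_mem' := ⟨1, T.one_mem, by simp [delta_one]⟩
                mul_mem' := ?_
                inv_mem' := ?_ }, rfl⟩
      · rintro a b ⟨x, hx, rfl⟩ ⟨y, hy, rfl⟩
        exact ⟨x * y, mul_mem hx hy, rh_delta_mul p G (hT1 y hy)⟩
      · rintro a ⟨x, hx, rfl⟩
        exact ⟨x⁻¹, inv_mem hx, rh_delta_inv p G (hT1 x hx)⟩
    obtain ⟨D, hDR⟩ := hD
    apply subset_antisymm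
    · have hle : ⁅(T.map (inlW p G)).map Q, (Subgroup.zpowers (sigma p G)).map Q⁆ ≤ D := by
        rw [Subgroup.commutator_le]
        intro t ht z hz
        obtain ⟨x, hx, rfl⟩ := Subgroup.mem_map.mp ht
        obtain ⟨v, hv, rfl⟩ := Subgroup.mem_map.mp hx
        obtain ⟨y, hy, rfl⟩ := Subgroup.mem_map.mp hz
        obtain ⟨m, rfl⟩ := Subgroup.mem_zpowers_iff.mp hy
        rw [← SetLike.mem_coe, hDR]
        rw [← map_commutatorElement, sigma_zpow, comm_inl_inr]
        have hval := rh_ucv p G T hT1 hT2 ((m : ZMod p)).val hv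
        rw [natCast_val_cast] at hval
        rw [show Q (inlW p G (v * (sh p G ((m : ZMod p)) v)⁻¹))
            = rh p G (j+1) (v * (sh p G ((m : ZMod p)) v)⁻¹) from rfl, hval]
        exact ⟨wseq p G v ((m : ZMod p)).val, wseq_mem p G T hT2 hv _, rfl⟩
      intro a ha
      rw [← hDR]
      exact hle ha
    · rintro _ ⟨v, hv, rfl⟩
      have : rh p G (j+1) (Delta p G v) = ⁅(Q (inlW p G v))⁻¹, (Q (sigma p G))⁻¹⁆ := by
        rw [show rh p G (j+1) (Delta p G v) = Q (inlW p G (Delta p G v)) from rfl,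
          delta_comm, map_commutatorElement, map_inv, map_inv]
      simp only [SetLike.mem_coe]
      rw [this]
      exact Subgroup.commutator_mem_commutator
        (inv_mem (Subgroup.mem_map_of_mem Q (Subgroup.mem_map_of_mem _ hv)))
        (inv_mem (Subgroup.mem_map_of_mem Q (Subgroup.mem_zpowers _)))

end GGSProof
namespace GGSProof
set_option linter.unusedSectionVars false

open Subgroup

variable (p : ℕ) (G : Type*) [Group G]

lemma mul_N_eq_preimage (j : ℕ) (X : Set (W p G)) :
    X * (NN p G j : Set (W p G)) = qh p G j ⁻¹' (qh p G j '' X) := by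
  ext a
  rw [Set.mem_mul]
  constructor
  · rintro ⟨x, hx, n, hn, rfl⟩
    exact ⟨x, hx, ((QuotientGroup.mk'_eq_mk' (N := NN p G j)).mpr ⟨n, hn, rfl⟩)⟩
  · rintro ⟨x, hx, hqx⟩
    obtain ⟨n, hn, rfl⟩ := (QuotientGroup.mk'_eq_mk' (N := NN p G j)).mp hqx
    exact ⟨x, hx, n, hn, rfl⟩

lemma mul_N_congr {j : ℕ} {X Y : Set (W p G)} (h : qh p G j '' X = qh p G j '' Y) :
    X * (NN p G j : Set (W p G)) = Y * (NN p G j : Set (W p G)) := by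
  rw [mul_N_eq_preimage, mul_N_eq_preimage, h]

lemma sh_neg_one_eq (v : ZMod p → G) : sh p G (-1) v = fun i => v (i - 1) := by
  funext i; simp [sh, sub_eq_add_neg]

lemma sh_iterate (c : ZMod p) (m : ℕ) (u : ZMod p → G) :
    sh p G c ((Delta p G)^[m] u) = (Delta p G)^[m] (sh p G c u) := by
  induction m generalizing u with
  | zero => rfl
  | succ m ih =>
    rw [Function.iterate_succ_apply, Function.iterate_succ_apply, ← sh_delta, ih]

section Closure

variable (J : Subgroup G)

lemma one_mem_E (m : ℕ) : (1 : ZMod p → G) ∈ (Delta p G)^[m] '' {v | ∀ t, v t ∈ J} := by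
  refine ⟨1, fun t => one_mem J, ?_⟩
  exact Function.iterate_fixed (delta_one p G) m

lemma E_succ (m : ℕ) : (Delta p G)^[m+1] '' {v : ZMod p → G | ∀ t, v t ∈ J}
    = Delta p G '' ((Delta p G)^[m] '' {v | ∀ t, v t ∈ J}) := by
  rw [Function.iterate_succ', Set.image_comp]

lemma E_gamma {j : ℕ} (hJ : J ≤ (⊤ : Subgroup G).lowerCentralSeries j) (m : ℕ) :
    ∀ v ∈ (Delta p G)^[m] '' {v : ZMod p → G | ∀ t, v t ∈ J},
      ∀ i, v i ∈ (⊤ : Subgroup G).lowerCentralSeries j := by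
  induction m with
  | zero => rintro v ⟨u, hu, rfl⟩ i; exact hJ (hu i)
  | succ m ih =>
    rw [E_succ]
    rintro v ⟨u, hu, rfl⟩
    exact delta_gamma p G (ih u hu)

lemma E_sh (m : ℕ) (c : ZMod p) {v : ZMod p → G}
    (hv : v ∈ (Delta p G)^[m] '' {v : ZMod p → G | ∀ t, v t ∈ J}) :
    sh p G c v ∈ (Delta p G)^[m] '' {v : ZMod p → G | ∀ t, v t ∈ J} := by
  obtain ⟨u, hu, rfl⟩ := hv
  exact ⟨sh p G c u, fun t => hu _, (sh_iterate p G c m u).symm⟩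

lemma closure_E_sh (m : ℕ) {v : ZMod p → G}
    (hv : v ∈ Subgroup.closure ((Delta p G)^[m] '' {v : ZMod p → G | ∀ t, v t ∈ J}))
    (c : ZMod p) :
    sh p G c v ∈ Subgroup.closure ((Delta p G)^[m] '' {v : ZMod p → G | ∀ t, v t ∈ J}) := by
  induction hv using Subgroup.closure_induction with
  | mem x hx => exact Subgroup.subset_closure (E_sh p G J m c hx)
  | one => rw [sh_one]; exact one_mem _
  | mul x y hx hy ihx ihy => rw [sh_mul]; exact mul_mem ihx ihy
  | inv x hx ihx => rw [sh_inv]; exact inv_mem ihx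

lemma closure_E {j : ℕ} (hJ : J ≤ (⊤ : Subgroup G).lowerCentralSeries j) (m : ℕ) :
    ∀ v ∈ Subgroup.closure ((Delta p G)^[m] '' {v : ZMod p → G | ∀ t, v t ∈ J}),
      ∃ z ∈ (Delta p G)^[m] '' {v : ZMod p → G | ∀ t, v t ∈ J},
        rh p G (j+1) v = rh p G (j+1) z := by
  induction m with
  | zero =>
    intro v hv
    have hE : (Delta p G)^[0] '' {v : ZMod p → G | ∀ t, v t ∈ J}
        = ((Subgroup.pi Set.univ fun _ => J : Subgroup (ZMod p → G)) : Set _) := by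
      rw [Function.iterate_zero, Set.image_id]
      ext u
      simp [Subgroup.mem_pi]
    rw [hE, Subgroup.closure_eq] at hv
    exact ⟨v, by rw [hE]; exact hv, rfl⟩
  | succ m ih =>
    intro v hv
    induction hv using Subgroup.closure_induction with
    | mem x hx => exact ⟨x, hx, rfl⟩
    | one => exact ⟨1, one_mem_E p G J _, rfl⟩
    | mul x y hx hy ihx ihy =>
      obtain ⟨zx, hzx, hex⟩ := ihx
      obtain ⟨zy, hzy, hey⟩ := ihy
      rw [E_succ] at hzx hzy
      obtain ⟨zx', hzx', rfl⟩ := hzx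
      obtain ⟨zy', hzy', rfl⟩ := hzy
      obtain ⟨u, hu, heu⟩ := ih _ (mul_mem (Subgroup.subset_closure hzx')
        (Subgroup.subset_closure hzy'))
      refine ⟨Delta p G u, by rw [E_succ]; exact ⟨u, hu, rfl⟩, ?_⟩
      rw [map_mul, hex, hey, ← rh_delta_mul p G (E_gamma p G J hJ m _ hzy'),
        rh_delta_congr p G heu.symm]
    | inv x hx ihx =>
      obtain ⟨zx, hzx, hex⟩ := ihx
      rw [E_succ] at hzx
      obtain ⟨zx', hzx', rfl⟩ := hzx
      obtain ⟨u, hu, heu⟩ := ih _ (inv_mem (Subgroup.subset_closure hzx'))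
      refine ⟨Delta p G u, by rw [E_succ]; exact ⟨u, hu, rfl⟩, ?_⟩
      rw [map_inv, hex, ← rh_delta_inv p G (E_gamma p G J hJ m _ hzx'),
        rh_delta_congr p G heu.symm]

lemma delta_closure_image {j : ℕ} (hJ : J ≤ (⊤ : Subgroup G).lowerCentralSeries j) (m : ℕ) :
    (fun v => rh p G (j+1) (Delta p G v)) ''
        ((Subgroup.closure ((Delta p G)^[m] '' {v : ZMod p → G | ∀ t, v t ∈ J})) : Set _)
      = rh p G (j+1) '' ((Delta p G)^[m+1] '' {v : ZMod p → G | ∀ t, v t ∈ J}) := by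
  apply subset_antisymm
  · rintro _ ⟨v, hv, rfl⟩
    obtain ⟨z, hz, he⟩ := closure_E p G J hJ m v hv
    refine ⟨Delta p G z, by rw [E_succ]; exact ⟨z, hz, rfl⟩, ?_⟩
    exact (rh_delta_congr p G he.symm).symm
  · rw [E_succ]
    rintro _ ⟨_, ⟨z, hz, rfl⟩, rfl⟩
    exact ⟨z, Subgroup.subset_closure hz, rfl⟩

end Closure
end GGSProof


open GGS Pointwise

/-- For a finite p-group G, j ≥ 1 and a σ-invariant subgroup T ≤ B(γ_j(G)):
    modulo N = B(γ_{j+1}(G)) one has [T, W(G)] = [T, ⟨σ⟩] = Δ(T); consequently, for every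
    J ≤ γ_j(G) and k ≥ 1, [Δ^{k−1}(B(J)), W(G)] ≡ [Δ^{k−1}(B(J)), ⟨σ⟩] ≡ Δ^k(B(J)) mod N.
    (Congruence mod N of subsets U, V is expressed as equality of the pointwise products
    U·N = V·N of subsets of W(G); γ_j(G) = `(⊤ : Subgroup G).lowerCentralSeries (j-1)`, and for the
    "consequently" part the commutator is taken with the subgroup generated by the set
    Δ^{k−1}(B(J)).) -/
theorem statement13 (p : ℕ) [Fact p.Prime] (hp : Odd p)
    (G : Type*) [Group G] [Fintype G] (hG : IsPGroup p G)
    (j : ℕ) (hj : 1 ≤ j) (T : Subgroup (ZMod p → G))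
    (hT1 : T ≤ Subgroup.pi Set.univ fun _ => (⊤ : Subgroup G).lowerCentralSeries (j - 1))
    (hT2 : ∀ v ∈ T, (fun i => v (i - 1)) ∈ T) :
    ((⁅Subgroup.map (inlW p G) T, (⊤ : Subgroup (W p G))⁆ : Subgroup (W p G)) *
        (BSub p G ((⊤ : Subgroup G).lowerCentralSeries j) : Set (W p G))
      = (⁅Subgroup.map (inlW p G) T, Subgroup.zpowers (sigma p G)⁆ : Subgroup (W p G)) *
        (BSub p G ((⊤ : Subgroup G).lowerCentralSeries j) : Set (W p G)))
    ∧ ((⁅Subgroup.map (inlW p G) T, (⊤ : Subgroup (W p G))⁆ : Subgroup (W p G)) *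
        (BSub p G ((⊤ : Subgroup G).lowerCentralSeries j) : Set (W p G))
      = ((inlW p G) '' (Delta p G '' (T : Set (ZMod p → G)))) *
        (BSub p G ((⊤ : Subgroup G).lowerCentralSeries j) : Set (W p G)))
    ∧ ∀ (J : Subgroup G), J ≤ (⊤ : Subgroup G).lowerCentralSeries (j - 1) → ∀ k : ℕ, 1 ≤ k →
        ((⁅Subgroup.closure ((inlW p G) ''
              ((Delta p G)^[k - 1] '' {v : ZMod p → G | ∀ t, v t ∈ J})),
            (⊤ : Subgroup (W p G))⁆ : Subgroup (W p G)) *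
          (BSub p G ((⊤ : Subgroup G).lowerCentralSeries j) : Set (W p G))
        = (⁅Subgroup.closure ((inlW p G) ''
              ((Delta p G)^[k - 1] '' {v : ZMod p → G | ∀ t, v t ∈ J})),
            Subgroup.zpowers (sigma p G)⁆ : Subgroup (W p G)) *
          (BSub p G ((⊤ : Subgroup G).lowerCentralSeries j) : Set (W p G)))
        ∧ ((⁅Subgroup.closure ((inlW p G) ''
              ((Delta p G)^[k - 1] '' {v : ZMod p → G | ∀ t, v t ∈ J})),
            (⊤ : Subgroup (W p G))⁆ : Subgroup (W p G)) *
          (BSub p G ((⊤ : Subgroup G).lowerCentralSeries j) : Set (W p G))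
        = ((inlW p G) '' ((Delta p G)^[k] '' {v : ZMod p → G | ∀ t, v t ∈ J})) *
          (BSub p G ((⊤ : Subgroup G).lowerCentralSeries j) : Set (W p G))) := by
  haveI : NeZero p := ⟨(Fact.out : p.Prime).ne_zero⟩
  obtain ⟨j', rfl⟩ : ∃ j', j = j' + 1 := ⟨j - 1, by omega⟩
  simp only [Nat.add_sub_cancel] at hT1 ⊢
  have hNN : BSub p G ((⊤ : Subgroup G).lowerCentralSeries (j'+1)) = GGSProof.NN p G (j'+1) := rfl
  set Q := GGSProof.qh p G (j'+1) with hQdef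
  have e1 : ∀ S : Subgroup (ZMod p → G),
      Subgroup.map Q ⁅Subgroup.map (inlW p G) S, (⊤ : Subgroup (W p G))⁆
        = ⁅(S.map (inlW p G)).map Q, ⊤⁆ := by
    intro S
    rw [Subgroup.map_commutator,
      Subgroup.map_top_of_surjective _ (GGSProof.qh_surjective p G _)]
  have e2 : ∀ S : Subgroup (ZMod p → G),
      Subgroup.map Q ⁅Subgroup.map (inlW p G) S, Subgroup.zpowers (sigma p G)⁆
        = ⁅(S.map (inlW p G)).map Q, (Subgroup.zpowers (sigma p G)).map Q⁆ :=
    fun S => Subgroup.map_commutator _ _ _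
  have hT1' : ∀ v ∈ T, ∀ i, v i ∈ (⊤ : Subgroup G).lowerCentralSeries j' :=
    fun v hv i => (Subgroup.mem_pi Set.univ).mp (hT1 hv) i (Set.mem_univ i)
  have hmain := GGSProof.main p G j' T hT1' hT2
  refine ⟨?_, ?_, ?_⟩
  · rw [hNN]
    apply GGSProof.mul_N_congr
    rw [← Subgroup.coe_map, ← Subgroup.coe_map, e1, e2, hmain.1]
  · rw [hNN]
    apply GGSProof.mul_N_congr
    rw [← Subgroup.coe_map, e1, hmain.1, hmain.2, Set.image_image, Set.image_image]
    rfl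
  · intro J hJ k hk
    obtain ⟨k', rfl⟩ : ∃ k', k = k' + 1 := ⟨k - 1, by omega⟩
    simp only [Nat.add_sub_cancel]
    set T3 := Subgroup.closure ((Delta p G)^[k'] '' {v : ZMod p → G | ∀ t, v t ∈ J}) with hT3
    have h1 : ∀ v ∈ T3, ∀ i, v i ∈ (⊤ : Subgroup G).lowerCentralSeries j' := by
      have hle : T3 ≤ Subgroup.pi Set.univ (fun _ => (⊤ : Subgroup G).lowerCentralSeries j') :=
        (Subgroup.closure_le _).mpr (fun v hv => (Subgroup.mem_pi Set.univ).mpr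
          fun i _ => GGSProof.E_gamma p G J hJ k' v hv i)
      exact fun v hv i => (Subgroup.mem_pi Set.univ).mp (hle hv) i (Set.mem_univ i)
    have h2 : ∀ v ∈ T3, (fun i => v (i - 1)) ∈ T3 := by
      intro v hv
      rw [← GGSProof.sh_neg_one_eq]
      exact GGSProof.closure_E_sh p G J k' hv (-1)
    have hm := GGSProof.main p G j' T3 h1 h2
    rw [← MonoidHom.map_closure, hNN]
    constructor
    · apply GGSProof.mul_N_congr
      rw [← Subgroup.coe_map, ← Subgroup.coe_map, e1, e2, hm.1]
    · apply GGSProof.mul_N_congr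
      rw [← Subgroup.coe_map, e1, hm.1, hm.2,
        GGSProof.delta_closure_image p G J hJ k']
      exact (Set.image_image (fun w => GGSProof.qh p G (j'+1) w) (fun v => inlW p G v)
        ((Delta p G)^[k'+1] '' {v : ZMod p → G | ∀ t, v t ∈ J})).symm
end
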